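/- arXiv:2011.03245 — 9 statements merged into one kernel-verified Lean document; each statement's English description precedes it below -/
import Mathlib

section
/- Let A be a complex C*-algebra and let a, b ∈ A with a ≠ 0. Then lim_{t→0⁺} (‖a + t·b‖ − ‖a‖)/t = (1/‖a‖) · lim_{t→0⁺} (‖a* a + t·a* b‖ − ‖a* a‖)/t. -/
open Filter Set Topology

section general
variable {E : Type*} [SeminormedAddCommGroup E] [NormedSpace ℝ E]

lemma slope_monotoneOn (v u : E) :
    MonotoneOn (fun t : ℝ => (‖v + t • u‖ - ‖v‖) / t) (Set.Ioi 0) := by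
  intro s hs t ht hst
  simp only [Set.mem_Ioi] at hs ht
  have h1 : (1 - s/t) • v + (s/t) • (v + t • u) = v + s • u := by
    rw [smul_add, ← add_assoc, ← add_smul, smul_smul, div_mul_cancel₀ _ ht.ne']
    have : 1 - s/t + s/t = 1 := by ring
    rw [this, one_smul]
  have key : ‖v + s • u‖ ≤ (1 - s/t) * ‖v‖ + (s/t) * ‖v + t • u‖ := by
    rw [← h1]
    refine (norm_add_le _ _).trans ?_
    rw [norm_smul, norm_smul, Real.norm_eq_abs, Real.norm_eq_abs,
      abs_of_nonneg (sub_nonneg.2 (div_le_one_of_le₀ hst ht.le)), abs_of_nonneg (by positivity)]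
  rw [div_le_div_iff₀ hs ht]
  have key2 : ‖v + s • u‖ * t ≤ (t - s) * ‖v‖ + s * ‖v + t • u‖ := by
    calc ‖v + s • u‖ * t ≤ ((1 - s/t) * ‖v‖ + s/t * ‖v + t • u‖) * t :=
          mul_le_mul_of_nonneg_right key ht.le
    _ = (t - s) * ‖v‖ + s * ‖v + t • u‖ := by field_simp
  nlinarith [key2]

lemma exists_slope_lim (v u : E) :
    ∃ d : ℝ, Tendsto (fun t : ℝ => (‖v + t • u‖ - ‖v‖) / t) (𝓝[>] (0:ℝ)) (𝓝 d) := by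
  have hbdd : BddBelow ((fun t : ℝ => (‖v + t • u‖ - ‖v‖) / t) '' Set.Ioi 0) := by
    refine ⟨-‖u‖, ?_⟩
    rintro x ⟨t, ht, rfl⟩
    simp only [Set.mem_Ioi] at ht
    have h1 : ‖v‖ ≤ ‖v + t • u‖ + t * ‖u‖ := by
      calc ‖v‖ = ‖(v + t • u) - t • u‖ := by rw [add_sub_cancel_right]
      _ ≤ ‖v + t • u‖ + ‖t • u‖ := norm_sub_le _ _
      _ = ‖v + t • u‖ + t * ‖u‖ := by
          rw [norm_smul, Real.norm_eq_abs, abs_of_pos ht]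
    rw [le_div_iff₀ ht]
    nlinarith
  exact ⟨_, (slope_monotoneOn v u).tendsto_nhdsGT hbdd⟩


lemma slope_shift (v u : E) {d s : ℝ} (hs : 0 < s)
    (hd : Tendsto (fun t : ℝ => (‖v + t • u‖ - ‖v‖) / t) (𝓝[>] (0:ℝ)) (𝓝 d)) :
    Tendsto (fun t : ℝ => (‖v + t • (u + s • v)‖ - ‖v‖) / t) (𝓝[>] (0:ℝ))
      (𝓝 (d + s * ‖v‖)) := by
  have hτ : Tendsto (fun t : ℝ => t / (1 + t * s)) (𝓝[>] (0:ℝ)) (𝓝[>] (0:ℝ)) := by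
    rw [tendsto_nhdsWithin_iff]
    constructor
    · have hc : ContinuousAt (fun t : ℝ => t / (1 + t * s)) 0 := by
        apply ContinuousAt.div
        · exact continuousAt_id
        · fun_prop
        · norm_num
      have := hc.tendsto
      simp only [zero_div, zero_mul, add_zero, div_one] at this
      exact this.mono_left nhdsWithin_le_nhds
    · filter_upwards [self_mem_nhdsWithin] with t ht
      have ht' : (0:ℝ) < t := ht
      exact Set.mem_Ioi.2 (div_pos ht' (by positivity))
  have comp : Tendsto (fun t : ℝ =>
      (‖v + (t / (1 + t * s)) • u‖ - ‖v‖) / (t / (1 + t * s)) + s * ‖v‖)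
      (𝓝[>] (0:ℝ)) (𝓝 (d + s * ‖v‖)) := (hd.comp hτ).add_const _
  refine comp.congr' ?_
  filter_upwards [self_mem_nhdsWithin] with t ht
  have ht' : (0:ℝ) < t := ht
  have hp : (0:ℝ) < 1 + t * s := by positivity
  have hkey : v + t • (u + s • v) = (1 + t * s) • (v + (t / (1 + t * s)) • u) := by
    match_scalars
    · ring
    · field_simp
  rw [hkey, norm_smul, Real.norm_eq_abs, abs_of_pos hp]
  field_simp
  ring

lemma tendsto_norm_shift (v u : E) {d : ℝ}
    (hd : Tendsto (fun t : ℝ => (‖v + t • u‖ - ‖v‖) / t) (𝓝[>] (0:ℝ)) (𝓝 d)) :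
    Tendsto (fun s : ℝ => ‖u + s • v‖ - s * ‖v‖) atTop (𝓝 d) := by
  have hinv : Tendsto (fun s : ℝ => s⁻¹) atTop (𝓝[>] (0:ℝ)) := by
    rw [tendsto_nhdsWithin_iff]
    exact ⟨tendsto_inv_atTop_zero, eventually_atTop.2 ⟨1, fun s hs =>
      Set.mem_Ioi.2 (inv_pos.2 (lt_of_lt_of_le one_pos hs))⟩⟩
  have comp := hd.comp hinv
  refine comp.congr' ?_
  filter_upwards [eventually_gt_atTop (0:ℝ)] with s hs
  have h1 : u + s • v = s • (v + s⁻¹ • u) := by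
    rw [smul_add, smul_smul, mul_inv_cancel₀ hs.ne']
    module
  simp only [Function.comp_apply]
  rw [h1, norm_smul, Real.norm_eq_abs, abs_of_pos hs]
  field_simp

end general

section cstar
variable {A : Type*} [NormedRing A] [StarRing A] [CStarRing A]
    [NormedAlgebra ℂ A] [StarModule ℂ A] [CompleteSpace A]

lemma cstar_quad_ineq (a b : A) {D L : ℝ}
    (hD : Tendsto (fun t : ℝ => (‖a + t • b‖ - ‖a‖) / t) (𝓝[>] (0:ℝ)) (𝓝 D))
    (hL : Tendsto (fun t : ℝ => (‖star a * a + t • (star a * b)‖ - ‖star a * a‖) / t)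
      (𝓝[>] (0:ℝ)) (𝓝 L)) :
    2 * ‖a‖ * D ≤ L + ‖a‖ * ‖b‖ := by
  have hfcont : Tendsto (fun t : ℝ => ‖a + t • b‖) (𝓝[>] (0:ℝ)) (𝓝 ‖a‖) := by
    have hc : Continuous fun t : ℝ => ‖a + t • b‖ := by fun_prop
    have h := hc.tendsto (0 : ℝ)
    simp only [zero_smul, add_zero] at h
    exact h.mono_left nhdsWithin_le_nhds
  have l1 : Tendsto (fun t : ℝ => (‖a + t • b‖ - ‖a‖) / t * (‖a + t • b‖ + ‖a‖))
      (𝓝[>] (0:ℝ)) (𝓝 (D * (‖a‖ + ‖a‖))) := hD.mul (hfcont.add_const ‖a‖)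
  have l2 : Tendsto (fun t : ℝ =>
      (‖star a * a + t • (star a * b)‖ - ‖star a * a‖) / t + ‖b‖ * ‖a + t • b‖)
      (𝓝[>] (0:ℝ)) (𝓝 (L + ‖b‖ * ‖a‖)) := hL.add (hfcont.const_mul ‖b‖)
  have hle : D * (‖a‖ + ‖a‖) ≤ L + ‖b‖ * ‖a‖ := by
    refine le_of_tendsto_of_tendsto l1 l2 ?_
    filter_upwards [self_mem_nhdsWithin] with t ht
    have ht' : (0:ℝ) < t := ht
    have e : star (a + t • b) * (a + t • b) =
        (star a * a + t • (star a * b)) + t • (star b * (a + t • b)) := by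
      rw [star_add, star_smul]
      simp only [star_trivial, add_mul, mul_add, mul_smul_comm, smul_mul_assoc, smul_add,
        smul_smul]
      abel
    have h2 : ‖a + t • b‖ * ‖a + t • b‖ ≤
        ‖star a * a + t • (star a * b)‖ + t * (‖b‖ * ‖a + t • b‖) := by
      calc ‖a + t • b‖ * ‖a + t • b‖ = ‖star (a + t • b) * (a + t • b)‖ :=
            (CStarRing.norm_star_mul_self).symm
      _ = ‖(star a * a + t • (star a * b)) + t • (star b * (a + t • b))‖ := by rw [e]
      _ ≤ ‖star a * a + t • (star a * b)‖ + ‖t • (star b * (a + t • b))‖ := norm_add_le _ _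
      _ ≤ ‖star a * a + t • (star a * b)‖ + t * (‖b‖ * ‖a + t • b‖) := by
          gcongr
          rw [norm_smul, Real.norm_eq_abs, abs_of_pos ht']
          exact mul_le_mul_of_nonneg_left
            ((norm_mul_le _ _).trans (by rw [norm_star])) ht'.le
    have expand : (‖a + t • b‖ - ‖a‖) / t * (‖a + t • b‖ + ‖a‖) =
        (‖a + t • b‖ * ‖a + t • b‖ - ‖star a * a‖) / t := by
      rw [CStarRing.norm_star_mul_self]
      field_simp
      ring
    rw [expand]
    have h3 : (‖a + t • b‖ * ‖a + t • b‖ - ‖star a * a‖) / t ≤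
        ((‖star a * a + t • (star a * b)‖ - ‖star a * a‖) + t * (‖b‖ * ‖a + t • b‖)) / t := by
      exact (div_le_div_iff_of_pos_right ht').mpr (by linarith)
    refine h3.trans_eq ?_
    rw [add_div, mul_div_cancel_left₀ _ ht'.ne']
  linarith
end cstar

/-- For `a ≠ 0` and `b` in a complex C*-algebra,
`lim_{t→0⁺} (‖a + t b‖ - ‖a‖)/t = (1/‖a‖) · lim_{t→0⁺} (‖a*a + t a*b‖ - ‖a*a‖)/t`
(both one-sided limits exist). -/
theorem gateaux_derivative_reduction_to_positive
    {A : Type*} [NormedRing A] [StarRing A] [CStarRing A]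
    [NormedAlgebra ℂ A] [StarModule ℂ A] [CompleteSpace A]
    (a b : A) (ha : a ≠ 0) :
    ∃ L : ℝ,
      Tendsto (fun t : ℝ => (‖star a * a + t • (star a * b)‖ - ‖star a * a‖) / t)
        (nhdsWithin 0 (Set.Ioi 0)) (nhds L) ∧
      Tendsto (fun t : ℝ => (‖a + t • b‖ - ‖a‖) / t)
        (nhdsWithin 0 (Set.Ioi 0)) (nhds ((1 / ‖a‖) * L)) := by
  have hna : (0:ℝ) < ‖a‖ := norm_pos_iff.2 ha
  obtain ⟨D, hD⟩ := exists_slope_lim a b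
  obtain ⟨L, hL⟩ := exists_slope_lim (star a * a) (star a * b)
  have hsa : ‖star a * a‖ = ‖a‖ * ‖a‖ := CStarRing.norm_star_mul_self
  -- easy direction : L ≤ ‖a‖ * D
  have hdir1 : L ≤ ‖a‖ * D := by
    refine le_of_tendsto_of_tendsto hL (hD.const_mul ‖a‖) ?_
    filter_upwards [self_mem_nhdsWithin] with t ht
    have ht' : (0:ℝ) < t := ht
    have hfac : star a * a + t • (star a * b) = star a * (a + t • b) := by
      rw [mul_add, mul_smul_comm]
    have hb : ‖star a * a + t • (star a * b)‖ ≤ ‖a‖ * ‖a + t • b‖ := by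
      rw [hfac]
      exact (norm_mul_le _ _).trans_eq (by rw [norm_star])
    have : (‖star a * a + t • (star a * b)‖ - ‖star a * a‖) / t ≤
        (‖a‖ * ‖a + t • b‖ - ‖a‖ * ‖a‖) / t := by
      rw [hsa] at *
      exact (div_le_div_iff_of_pos_right ht').mpr (by linarith)
    refine this.trans_eq ?_
    field_simp
  -- hard direction : ‖a‖ * D ≤ L
  have hdir2 : ‖a‖ * D ≤ L := by
    have hk : Tendsto (fun s : ℝ => L + ‖a‖ * ((‖b + s • a‖ - s * ‖a‖) - D)) atTop
        (𝓝 (L + ‖a‖ * (D - D))) :=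
      tendsto_const_nhds.add ((((tendsto_norm_shift a b hD).sub_const D).const_mul ‖a‖))
    have hk' : Tendsto (fun s : ℝ => L + ‖a‖ * ((‖b + s • a‖ - s * ‖a‖) - D)) atTop (𝓝 L) := by
      simpa using hk
    refine ge_of_tendsto hk' ?_
    filter_upwards [eventually_gt_atTop (0:ℝ)] with s hs
    have hD' := slope_shift a b hs hD
    have hL' := slope_shift (star a * a) (star a * b) hs hL
    have hdir : star a * b + s • (star a * a) = star a * (b + s • a) := by
      rw [mul_add, mul_smul_comm]
    rw [hdir] at hL'
    have hkey := cstar_quad_ineq a (b + s • a) hD' hL'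
    rw [hsa] at hkey
    nlinarith [hkey]
  have hLD : L = ‖a‖ * D := le_antisymm hdir1 hdir2
  refine ⟨L, hL, ?_⟩
  have : (1 / ‖a‖) * L = D := by
    rw [hLD]
    field_simp
  rw [this]
  exact hD
end

section
/- Let A be a complex C*-algebra, let f be a bounded linear functional on A of norm one, and suppose there exists a nonzero a ∈ A with f(a* a) = ‖a* a‖. Then f is a state on A, i.e. f is positive. -/
set_option maxHeartbeats 1000000

open ComplexOrder

lemma aux_norm_sub_le {B : Type*} [CStarAlgebra B] [Nontrivial B] (y : B) (r : ℝ)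
    (hn : ‖star y * y‖ ≤ 2 * r) :
    ‖star y * y - algebraMap ℂ B (r : ℂ)‖ ≤ r := by
  have hr0 : 0 ≤ r := by nlinarith [norm_nonneg (star y * y)]
  have hsa : IsSelfAdjoint (star y * y) := IsSelfAdjoint.star_mul_self y
  have halg : algebraMap ℂ B (r : ℂ) = algebraMap ℝ B r := by
    rw [IsScalarTower.algebraMap_apply ℝ ℂ B r]; norm_cast
  rw [halg]
  have h1 : star y * y - algebraMap ℝ B r = cfc (fun t : ℝ => t - r) (star y * y) := by
    rw [cfc_sub (fun t : ℝ => t) (fun _ : ℝ => r) (star y * y), cfc_id' ℝ (star y * y),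
      cfc_const r (star y * y)]
  rw [h1]
  refine norm_cfc_le hr0 fun t ht => ?_
  have h2 : 0 ≤ t := spectrum_star_mul_self_nonneg t ht
  have h3 : t ≤ ‖star y * y‖ := by
    simpa [Real.norm_of_nonneg h2] using spectrum.norm_le_norm_of_mem ht
  rw [Real.norm_eq_abs, abs_le]
  constructor <;> nlinarith

lemma aux_norm_add_I {B : Type*} [CStarAlgebra B] [Nontrivial B] (s : B)
    (hs : IsSelfAdjoint s) (t : ℝ) :
    ‖s + algebraMap ℂ B ((t : ℂ) * Complex.I)‖ ^ 2 ≤ ‖s‖ ^ 2 + t ^ 2 := by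
  set w := algebraMap ℂ B ((t : ℂ) * Complex.I) with hw
  have hstarw : star w = -w := by
    rw [hw, ← algebraMap_star_comm, ← map_neg]
    congr 1
    simp [Complex.ext_iff]
  have hcomm : w * s = s * w := Algebra.commutes _ s
  have hww : w * w = algebraMap ℂ B (-((t : ℂ) ^ 2)) := by
    rw [hw, ← map_mul]
    congr 1
    rw [mul_assoc, mul_comm Complex.I, mul_assoc, Complex.I_mul_I]
    ring
  have key : star (s + w) * (s + w) = s * s + algebraMap ℂ B ((t : ℂ) ^ 2) := by
    rw [star_add, hs.star_eq, hstarw]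
    have expand : (s + -w) * (s + w) = s * s + s * w - w * s - w * w := by noncomm_ring
    rw [expand, hcomm, hww, map_neg, sub_neg_eq_add]
    abel
  calc ‖s + w‖ ^ 2 = ‖star (s + w) * (s + w)‖ := by
        rw [CStarRing.norm_star_mul_self, sq]
    _ = ‖s * s + algebraMap ℂ B ((t : ℂ) ^ 2)‖ := by rw [key]
    _ ≤ ‖s * s‖ + ‖algebraMap ℂ B ((t : ℂ) ^ 2)‖ := norm_add_le _ _
    _ = ‖s‖ ^ 2 + t ^ 2 := by
        rw [norm_algebraMap']
        nth_rw 1 [← hs.star_eq]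
        rw [CStarRing.norm_star_mul_self, sq]
        simp [Complex.norm_real, sq_abs]
        ring

lemma aux_sq_le (w : ℂ) (r : ℝ) (h : ‖w‖ ≤ r) : w.re ^ 2 + w.im ^ 2 ≤ r ^ 2 := by
  have h1 := pow_le_pow_left₀ (norm_nonneg w) h 2
  rw [Complex.sq_norm, Complex.normSq_apply] at h1
  nlinarith

/-- A norm-one bounded linear functional `f` on a complex C*-algebra which satisfies
`f(a* a) = ‖a* a‖` for some nonzero `a` is positive, hence a state. -/
theorem norm_one_functional_attaining_on_positive_is_state
    {A : Type*} [NormedRing A] [StarRing A] [CStarRing A]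
    [NormedAlgebra ℂ A] [StarModule ℂ A] [CompleteSpace A]
    (f : A →L[ℂ] ℂ) (hf : ‖f‖ = 1)
    (a : A) (ha : a ≠ 0) (hfa : f (star a * a) = (‖star a * a‖ : ℂ)) :
    ∀ x : A, 0 ≤ f (star x * x) := by
  intro x
  letI : NonUnitalCStarAlgebra A := { }
  -- Hahn-Banach extension of `f` to the unitization
  let p₀ : Subspace ℂ (Unitization ℂ A) := LinearMap.range (Unitization.inrHom ℂ ℂ A)
  let g₀ : p₀ →ₗ[ℂ] ℂ := f.toLinearMap ∘ₗ (Unitization.sndHom ℂ ℂ A) ∘ₗ p₀.subtype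
  have gbound : ∀ y : p₀, ‖g₀ y‖ ≤ 1 * ‖y‖ := by
    rintro ⟨y, x', rfl⟩
    have hval : (Unitization.inrHom ℂ ℂ A) x' = (x' : Unitization ℂ A) := rfl
    simp only [g₀, LinearMap.coe_comp, Function.comp_apply, Submodule.coe_subtype,
      ContinuousLinearMap.coe_coe, hval, Unitization.sndHom_apply, Unitization.snd_inr]
    calc ‖f x'‖ ≤ ‖f‖ * ‖x'‖ := f.le_opNorm x'
      _ = 1 * ‖(x' : Unitization ℂ A)‖ := by rw [hf, Unitization.norm_inr]
  let f₀ : p₀ →L[ℂ] ℂ := g₀.mkContinuous 1 gbound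
  obtain ⟨F, hFext, hFnorm⟩ := exists_extension_norm_eq p₀ f₀
  have hFA : ∀ z : A, F (z : Unitization ℂ A) = f z := by
    intro z
    have h := hFext ⟨(z : Unitization ℂ A), ⟨z, rfl⟩⟩
    simpa [f₀, g₀] using h
  have hFle : ∀ u : Unitization ℂ A, ‖F u‖ ≤ ‖u‖ := by
    intro u
    have hn1 : ‖F‖ ≤ 1 := hFnorm.le.trans (LinearMap.mkContinuous_norm_le _ zero_le_one _)
    calc ‖F u‖ ≤ ‖F‖ * ‖u‖ := F.le_opNorm u
      _ ≤ 1 * ‖u‖ := by gcongr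
      _ = ‖u‖ := one_mul _
  -- the normalized positive element b = star c * c
  have hpn : ‖star a * a‖ ≠ 0 := by
    rw [CStarRing.norm_star_mul_self]
    have : ‖a‖ ≠ 0 := norm_ne_zero_iff.mpr ha
    positivity
  set c : A := (((Real.sqrt ‖star a * a‖ : ℝ) : ℂ))⁻¹ • a with hc
  have hb : star c * c = ((‖star a * a‖ : ℂ))⁻¹ • (star a * a) := by
    rw [hc, star_smul, smul_mul_smul_comm]
    congr 1
    rw [star_inv₀, Complex.star_def, Complex.conj_ofReal, ← mul_inv,
      ← Complex.ofReal_mul, Real.mul_self_sqrt (norm_nonneg _)]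
  have hfb : f (star c * c) = 1 := by
    rw [hb, map_smul, hfa, smul_eq_mul, inv_mul_cancel₀ (by exact_mod_cast hpn)]
  have hbnorm : ‖star c * c‖ = 1 := by
    rw [hb, norm_smul, norm_inv, Complex.norm_real, Real.norm_eq_abs,
      abs_of_nonneg (norm_nonneg _), inv_mul_cancel₀ hpn]
  -- F 1 = 1
  have hband : ((star c * c : A) : Unitization ℂ A)
      = star ((c : Unitization ℂ A)) * (c : Unitization ℂ A) := by
    rw [Unitization.inr_mul, Unitization.inr_star]
  have h1 : ‖star ((c : Unitization ℂ A)) * (c : Unitization ℂ A)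
      - algebraMap ℂ (Unitization ℂ A) (((1:ℝ)/2 : ℝ) : ℂ)‖ ≤ (1:ℝ)/2 := by
    refine aux_norm_sub_le _ _ ?_
    rw [← hband, Unitization.norm_inr, hbnorm]
    norm_num
  have hFb : F (star ((c : Unitization ℂ A)) * (c : Unitization ℂ A)) = 1 := by
    rw [← hband, hFA, hfb]
  have e1 : ‖(1:ℂ) - (((1:ℝ)/2 : ℝ) : ℂ) * F 1‖ ≤ (1:ℝ)/2 := by
    have h := hFle (star ((c : Unitization ℂ A)) * (c : Unitization ℂ A)
      - algebraMap ℂ (Unitization ℂ A) (((1:ℝ)/2 : ℝ) : ℂ))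
    have hFhalf : F (algebraMap ℂ (Unitization ℂ A) (((1:ℝ)/2 : ℝ) : ℂ))
        = (((1:ℝ)/2 : ℝ) : ℂ) * F 1 := by
      rw [Algebra.algebraMap_eq_smul_one, map_smul, smul_eq_mul]
    rw [map_sub, hFb, hFhalf] at h
    exact h.trans h1
  have e2 : ‖F 1‖ ≤ 1 := by simpa using hFle 1
  have hF1 : F 1 = 1 := by
    have q1 := aux_sq_le _ _ e1
    have q2 := aux_sq_le _ _ e2
    simp only [Complex.sub_re, Complex.sub_im, Complex.one_re, Complex.one_im, Complex.mul_re,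
      Complex.mul_im, Complex.ofReal_re, Complex.ofReal_im] at q1 q2
    apply Complex.ext
    · simp only [Complex.one_re]; nlinarith [q1, q2]
    · simp only [Complex.one_im]; nlinarith [q1, q2]
  -- the positive element Q
  set Q : Unitization ℂ A := ((star x * x : A) : Unitization ℂ A) with hQdef
  have hQ : Q = star ((x : Unitization ℂ A)) * (x : Unitization ℂ A) := by
    rw [hQdef, Unitization.inr_mul, Unitization.inr_star]
  have hFQ : F Q = f (star x * x) := hFA _
  set r : ℝ := ‖Q‖ / 2 with hr
  have hFr : F (algebraMap ℂ (Unitization ℂ A) ((r:ℝ) : ℂ)) = ((r:ℝ) : ℂ) := by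
    rw [Algebra.algebraMap_eq_smul_one, map_smul, smul_eq_mul, hF1, mul_one]
  have e3 : ‖F Q - ((r:ℝ) : ℂ)‖ ≤ r := by
    have h2 : ‖Q - algebraMap ℂ (Unitization ℂ A) ((r:ℝ) : ℂ)‖ ≤ r := by
      rw [hQ]
      refine aux_norm_sub_le _ _ ?_
      rw [← hQ, hr]; linarith
    have h := hFle (Q - algebraMap ℂ (Unitization ℂ A) ((r:ℝ) : ℂ))
    rw [map_sub, hFr] at h
    exact h.trans h2
  have hsQ : IsSelfAdjoint Q := by rw [hQ]; exact IsSelfAdjoint.star_mul_self _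
  have e4 : ∀ t : ℝ, (F Q).re ^ 2 + ((F Q).im + t) ^ 2 ≤ ‖Q‖ ^ 2 + t ^ 2 := by
    intro t
    have hn := aux_norm_add_I Q hsQ t
    have hvF : F (Q + algebraMap ℂ (Unitization ℂ A) ((t:ℂ) * Complex.I))
        = F Q + (t:ℂ) * Complex.I := by
      rw [map_add, Algebra.algebraMap_eq_smul_one, map_smul, smul_eq_mul, hF1, mul_one]
    have hsq : ‖F Q + (t:ℂ) * Complex.I‖ ^ 2 ≤ ‖Q‖ ^ 2 + t ^ 2 := by
      rw [← hvF]
      calc ‖F _‖ ^ 2 ≤ ‖Q + algebraMap ℂ (Unitization ℂ A) ((t:ℂ) * Complex.I)‖ ^ 2 :=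
            pow_le_pow_left₀ (norm_nonneg _) (hFle _) 2
        _ ≤ ‖Q‖ ^ 2 + t ^ 2 := hn
    have hq := aux_sq_le _ _ (le_refl ‖F Q + (t:ℂ) * Complex.I‖)
    have : (F Q + (t:ℂ) * Complex.I).re ^ 2 + (F Q + (t:ℂ) * Complex.I).im ^ 2
        ≤ ‖Q‖ ^ 2 + t ^ 2 := by
      have h5 : ‖F Q + (t:ℂ) * Complex.I‖ ^ 2
          = (F Q + (t:ℂ) * Complex.I).re ^ 2 + (F Q + (t:ℂ) * Complex.I).im ^ 2 := by
        rw [Complex.sq_norm, Complex.normSq_apply]; ring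
      rw [← h5]; exact hsq
    simpa [Complex.add_re, Complex.add_im, Complex.mul_re, Complex.mul_im] using this
  have him : (F Q).im = 0 := by
    by_contra hβ
    have h := e4 ((‖Q‖ ^ 2 + 1) / (2 * (F Q).im))
    have h2βt : 2 * (F Q).im * ((‖Q‖ ^ 2 + 1) / (2 * (F Q).im)) = ‖Q‖ ^ 2 + 1 := by
      field_simp
    nlinarith [sq_nonneg (F Q).re, sq_nonneg (F Q).im]
  have hre0 : 0 ≤ (F Q).re := by
    have q3 := aux_sq_le _ _ e3
    simp only [Complex.sub_re, Complex.sub_im, Complex.ofReal_re, Complex.ofReal_im, him] at q3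
    nlinarith [q3, norm_nonneg Q, hr]
  rw [← hFQ, Complex.le_def]
  exact ⟨by simpa using hre0, by simp [him]⟩
end

section
/- Let A be a complex C*-algebra, let a ∈ A, and let B be a linear subspace of A. Then a is Birkhoff–James orthogonal to B if and only if a* a is Birkhoff–James orthogonal to the subspace a* B = { a* b : b ∈ B }. -/
/-- In a complex C*-algebra, `a` is Birkhoff–James orthogonal to a subspace `B`
if and only if `a* a` is Birkhoff–James orthogonal to the subspace `a* B`. -/
theorem birkhoffJames_orthogonal_iff_star_mul
    {A : Type*} [NormedRing A] [StarRing A] [CStarRing A]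
    [NormedAlgebra ℂ A] [StarModule ℂ A] [CompleteSpace A]
    (a : A) (B : Submodule ℂ A) :
    (∀ b ∈ B, ‖a‖ ≤ ‖a + b‖) ↔
      (∀ c ∈ {c : A | ∃ b ∈ B, c = star a * b}, ‖star a * a‖ ≤ ‖star a * a + c‖) := by
  constructor
  · intro H c hc
    obtain ⟨b, hb, rfl⟩ := hc
    set p := star a * a with hp
    set b₀ : A := (1/2 : ℂ) • b with hb₀def
    have hb₀ : b₀ ∈ B := B.smul_mem _ hb
    set h : A := star a * b₀ + star b₀ * a with hh
    -- key inequality for small t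
    have key : ∀ t : ℝ, 0 < t → t ≤ 1 → ‖p‖ ≤ ‖p + h‖ + t * ‖b₀‖ ^ 2 := by
      intro t ht ht1
      have hbt : ((t : ℂ)) • b₀ ∈ B := B.smul_mem _ hb₀
      have h1 : ‖a‖ ≤ ‖a + (t : ℂ) • b₀‖ := H _ hbt
      have hpn : ‖p‖ = ‖a‖ * ‖a‖ := CStarRing.norm_star_mul_self
      have h2 : ‖p‖ ≤ ‖star (a + (t : ℂ) • b₀) * (a + (t : ℂ) • b₀)‖ := by
        rw [hpn, CStarRing.norm_star_mul_self]
        exact mul_le_mul h1 h1 (norm_nonneg a) (norm_nonneg _)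
      have h3 : star (a + (t : ℂ) • b₀) * (a + (t : ℂ) • b₀)
          = (p + (t : ℂ) • h) + (t : ℂ) • ((t : ℂ) • (star b₀ * b₀)) := by
        have hstar : star ((t : ℂ) • b₀) = (t : ℂ) • star b₀ := by
          simp [star_smul, Complex.conj_ofReal]
        rw [star_add, hstar]
        simp only [hp, hh, mul_add, add_mul, smul_add, smul_mul_assoc, mul_smul_comm]
        abel
      have h4 : ‖p‖ ≤ ‖p + (t : ℂ) • h‖ + t ^ 2 * ‖b₀‖ ^ 2 := by
        calc ‖p‖ ≤ ‖(p + (t : ℂ) • h) + (t : ℂ) • ((t : ℂ) • (star b₀ * b₀))‖ := h3 ▸ h2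
          _ ≤ ‖p + (t : ℂ) • h‖ + ‖(t : ℂ) • ((t : ℂ) • (star b₀ * b₀))‖ := norm_add_le _ _
          _ = ‖p + (t : ℂ) • h‖ + t ^ 2 * ‖b₀‖ ^ 2 := by
              rw [norm_smul, norm_smul, CStarRing.norm_star_mul_self]
              simp [abs_of_pos ht]
              ring
      -- convexity
      have h5 : ‖p + (t : ℂ) • h‖ ≤ (1 - t) * ‖p‖ + t * ‖p + h‖ := by
        have : p + (t : ℂ) • h = ((1 - t : ℝ) : ℂ) • p + (t : ℂ) • (p + h) := by
          push_cast
          module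
        rw [this]
        calc ‖((1 - t : ℝ) : ℂ) • p + (t : ℂ) • (p + h)‖
            ≤ ‖((1 - t : ℝ) : ℂ) • p‖ + ‖(t : ℂ) • (p + h)‖ := norm_add_le _ _
          _ = (1 - t) * ‖p‖ + t * ‖p + h‖ := by
              rw [norm_smul, norm_smul]
              simp only [Complex.norm_real, Real.norm_eq_abs]
              rw [abs_of_nonneg (by linarith : (0:ℝ) ≤ 1 - t), abs_of_pos ht]
      have := h4.trans (by linarith : ‖p + (t : ℂ) • h‖ + t ^ 2 * ‖b₀‖ ^ 2
          ≤ (1 - t) * ‖p‖ + t * ‖p + h‖ + t ^ 2 * ‖b₀‖ ^ 2)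
      nlinarith [sq_nonneg t]
    -- take t → 0 : ‖p‖ ≤ ‖p + h‖
    have hph : ‖p‖ ≤ ‖p + h‖ := by
      refine le_of_forall_pos_le_add fun ε hε => ?_
      set t : ℝ := min 1 (ε / (‖b₀‖ ^ 2 + 1)) with htdef
      have hden : (0:ℝ) < ‖b₀‖ ^ 2 + 1 := by positivity
      have ht0 : 0 < t := lt_min one_pos (div_pos hε hden)
      have ht1 : t ≤ 1 := min_le_left _ _
      have := key t ht0 ht1
      have htle : t * ‖b₀‖ ^ 2 ≤ ε := by
        have h1 : t ≤ ε / (‖b₀‖ ^ 2 + 1) := min_le_right _ _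
        have h2 : t * ‖b₀‖ ^ 2 ≤ (ε / (‖b₀‖ ^ 2 + 1)) * (‖b₀‖ ^ 2 + 1) := by
          apply mul_le_mul h1 (by linarith) (by positivity) (by positivity)
        rw [div_mul_cancel₀ _ (ne_of_gt hden)] at h2
        exact h2
      linarith
    -- pass from hermitian part back
    have hfinal : ‖p + h‖ ≤ ‖p + star a * b‖ := by
      set x : A := p + star a * b with hx
      have hsx : star x = p + star b * a := by
        simp [hx, hp, star_add, star_mul]
      have hstarb₀ : star b₀ = (1/2 : ℂ) • star b := by
        rw [hb₀def]
        simp [star_smul]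
      have hxx : p + h = (1/2 : ℂ) • (x + star x) := by
        rw [hsx, hx, hh, hstarb₀, hb₀def]
        simp only [smul_mul_assoc, mul_smul_comm]
        module
      rw [hxx]
      calc ‖(1/2 : ℂ) • (x + star x)‖ = (1/2) * ‖x + star x‖ := by
            rw [norm_smul]; norm_num
        _ ≤ (1/2) * (‖x‖ + ‖star x‖) := by
            have := norm_add_le x (star x)
            linarith
        _ = ‖x‖ := by rw [norm_star]; ring
    exact hph.trans hfinal
  · intro H b hb
    by_cases ha : a = 0
    · simp [ha]
    · have hap : 0 < ‖a‖ := norm_pos_iff.mpr ha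
      have h1 : ‖star a * a‖ ≤ ‖star a * a + star a * b‖ := H _ ⟨b, hb, rfl⟩
      have h2 : ‖star a * a + star a * b‖ = ‖star a * (a + b)‖ := by rw [mul_add]
      have h3 : ‖star a * (a + b)‖ ≤ ‖star a‖ * ‖a + b‖ := norm_mul_le _ _
      rw [CStarRing.norm_star_mul_self] at h1
      rw [norm_star] at h3
      have : ‖a‖ * ‖a‖ ≤ ‖a‖ * ‖a + b‖ := by
        calc ‖a‖ * ‖a‖ ≤ ‖star a * a + star a * b‖ := h1
          _ = ‖star a * (a + b)‖ := h2
          _ ≤ ‖a‖ * ‖a + b‖ := h3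
      exact le_of_mul_le_mul_left this hap
end

section
/- Let Ω be a locally compact Hausdorff space, let C_b(Ω) be the C*-algebra of bounded continuous complex-valued functions on Ω with the supremum norm, and let C_0(Ω) ⊆ C_b(Ω) be the ideal of functions vanishing at infinity. Let f ∈ C_b(Ω) satisfy dist(f, C_0(Ω)) < ‖f‖_∞, and suppose |f| attains the value ‖f‖_∞ at exactly one point x₀ ∈ Ω. Let B be a linear subspace of C_b(Ω). Then f is Birkhoff–James orthogonal to B if and only if h(x₀) = 0 for all h ∈ B. -/
open MeasureTheory BoundedContinuousFunction ZeroAtInfty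

/-- Let `Ω` be a locally compact Hausdorff space and `f ∈ C_b(Ω)` with
`dist(f, C₀(Ω)) < ‖f‖_∞`, and suppose `|f|` attains the value `‖f‖_∞` at exactly
one point `x₀`.  Then `f` is Birkhoff–James orthogonal to a subspace `B` of `C_b(Ω)`
iff `h x₀ = 0` for all `h ∈ B`. -/
theorem birkhoffJames_orthogonal_iff_vanishes_at_peak_point
    {Ω : Type*} [TopologicalSpace Ω] [LocallyCompactSpace Ω] [T2Space Ω]
    (f : Ω →ᵇ ℂ)
    (hdist : Metric.infDist f
      (Set.range (ZeroAtInftyContinuousMap.toBCF : C₀(Ω, ℂ) → Ω →ᵇ ℂ)) < ‖f‖)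
    (x₀ : Ω) (hx₀ : ‖f x₀‖ = ‖f‖)
    (huniq : ∀ x : Ω, ‖f x‖ = ‖f‖ → x = x₀)
    (B : Submodule ℂ (Ω →ᵇ ℂ)) :
    (∀ h ∈ B, ‖f‖ ≤ ‖f + h‖) ↔ ∀ h ∈ B, h x₀ = 0 := by
  have hnorm_x₀ : ‖f x₀‖ = ‖f‖ := by exact hx₀
  constructor
  · -- hard direction
    intro horth h hB
    by_contra hne
    set M := ‖f‖ with hMdef
    have hM : 0 < M := lt_of_le_of_lt Metric.infDist_nonneg hdist
    -- pick an approximant g ∈ C₀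
    set r : ℝ := (Metric.infDist f
      (Set.range (ZeroAtInftyContinuousMap.toBCF : C₀(Ω, ℂ) → Ω →ᵇ ℂ)) + M) / 2 with hrdef
    have hrM : r < M := by
      have := Metric.infDist_nonneg (s :=
        Set.range (ZeroAtInftyContinuousMap.toBCF : C₀(Ω, ℂ) → Ω →ᵇ ℂ)) (x := f)
      simp only [hrdef]
      linarith
    obtain ⟨g, hg⟩ : ∃ g : C₀(Ω, ℂ), dist f g.toBCF < r := by
      have hne' : (Set.range (ZeroAtInftyContinuousMap.toBCF : C₀(Ω, ℂ) → Ω →ᵇ ℂ)).Nonempty :=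
        ⟨(0 : C₀(Ω, ℂ)).toBCF, 0, rfl⟩
      have : Metric.infDist f
          (Set.range (ZeroAtInftyContinuousMap.toBCF : C₀(Ω, ℂ) → Ω →ᵇ ℂ)) < r := by
        simp only [hrdef]; linarith
      obtain ⟨y, ⟨g, hgy⟩, hy⟩ := (Metric.infDist_lt_iff hne').mp this
      exact ⟨g, by rwa [hgy]⟩
    set η : ℝ := M - r with hηdef
    have hη : 0 < η := by simp only [hηdef]; linarith
    -- a compact set outside of which |f| < M - η/2
    have hg0 : Filter.Tendsto g (Filter.cocompact Ω) (nhds 0) := g.zero_at_infty'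
    have hgsmall : {x : Ω | ‖g x‖ < η / 2} ∈ Filter.cocompact Ω := by
      have := NormedAddCommGroup.tendsto_nhds_zero.mp hg0 (η / 2) (by linarith)
      exact this
    obtain ⟨K, hKc, hKsub⟩ := Filter.mem_cocompact.mp hgsmall
    have hK : ∀ x : Ω, x ∉ K → ‖f x‖ < M - η / 2 := by
      intro x hx
      have h1 : ‖g x‖ < η / 2 := hKsub hx
      have h2 : ‖f x - g x‖ ≤ ‖f - g.toBCF‖ := by
        have := (f - g.toBCF).norm_coe_le_norm x
        simpa using this
      have h3 : ‖f - g.toBCF‖ < r := by rwa [← dist_eq_norm]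
      have h4 : ‖f x‖ ≤ ‖f x - g x‖ + ‖g x‖ := by
        simpa using norm_add_le (f x - g x) (g x)
      simp only [hηdef]
      linarith
    -- normalize h: h' x₀ = f x₀
    have hfx₀ : f x₀ ≠ 0 := by
      intro h0
      rw [h0] at hnorm_x₀
      simp at hnorm_x₀
      linarith
    set c : ℂ := f x₀ / h x₀ with hcdef
    set h' : Ω →ᵇ ℂ := c • h with hh'def
    have hh'x₀ : h' x₀ = f x₀ := by
      simp only [hh'def, BoundedContinuousFunction.coe_smul, Pi.smul_apply, smul_eq_mul, hcdef]
      field_simp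
    -- open neighborhood U of x₀
    set U : Set Ω := {x | ‖f x - f x₀‖ < M / 4 ∧ ‖h' x - f x₀‖ < M / 4} with hUdef
    have hU_open : IsOpen U := by
      have c1 : Continuous fun x : Ω => ‖f x - f x₀‖ :=
        (f.continuous.sub continuous_const).norm
      have c2 : Continuous fun x : Ω => ‖h' x - f x₀‖ :=
        (h'.continuous.sub continuous_const).norm
      exact (isOpen_Iio.preimage c1).inter (isOpen_Iio.preimage c2)
    have hx₀U : x₀ ∈ U := by
      constructor <;> simp [hh'x₀] <;> linarith
    -- key: near-maximizers of |f| lie in U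
    have hkey : ∃ δ : ℝ, 0 < δ ∧ ∀ x : Ω, M - δ < ‖f x‖ → x ∈ U := by
      set S : Set Ω := K \ U with hSdef
      have hSc : IsCompact S := hKc.diff hU_open
      by_cases hS : S.Nonempty
      · obtain ⟨x₁, hx₁S, hx₁max⟩ := hSc.exists_isMaxOn hS
          ((f.continuous.norm).continuousOn)
        set m : ℝ := ‖f x₁‖ with hmdef
        have hmM : m < M := by
          rcases lt_or_eq_of_le (by simpa using f.norm_coe_le_norm x₁) with hlt | heq
          · exact hlt
          · exfalso
            have : x₁ = x₀ := huniq x₁ (by exact heq)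
            exact hx₁S.2 (this ▸ hx₀U)
        refine ⟨min (η / 2) ((M - m) / 2), lt_min (by linarith) (by linarith), ?_⟩
        intro x hx
        have hxK : x ∈ K := by
          by_contra hxK
          have := hK x hxK
          have h5 : M - η / 2 ≤ M - min (η / 2) ((M - m) / 2) := by
            have := min_le_left (η / 2) ((M - m) / 2); linarith
          linarith
        by_contra hxU
        have hxS : x ∈ S := ⟨hxK, hxU⟩
        have : ‖f x‖ ≤ ‖f x₁‖ := hx₁max hxS
        have h6 : M - min (η / 2) ((M - m) / 2) ≥ M - (M - m) / 2 := by
          have := min_le_right (η / 2) ((M - m) / 2); linarith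
        simp only [← hmdef] at this
        linarith
      · refine ⟨η / 2, by linarith, ?_⟩
        intro x hx
        have hxK : x ∈ K := by
          by_contra hxK
          have := hK x hxK
          linarith
        by_contra hxU
        exact hS ⟨x, hxK, hxU⟩
    obtain ⟨δ, hδ, hδU⟩ := hkey
    -- choose t
    set t : ℝ := min (1 / 2) (δ / (2 * (‖h'‖ + 1))) with htdef
    have hh'nn : (0 : ℝ) ≤ ‖h'‖ := norm_nonneg _
    have ht0 : 0 < t := by
      apply lt_min (by norm_num)
      positivity
    have ht1 : t ≤ 1 / 2 := min_le_left _ _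
    have hth : t * ‖h'‖ ≤ δ / 2 := by
      have h1 : t ≤ δ / (2 * (‖h'‖ + 1)) := min_le_right _ _
      have h2 : t * ‖h'‖ ≤ (δ / (2 * (‖h'‖ + 1))) * ‖h'‖ :=
        mul_le_mul_of_nonneg_right h1 hh'nn
      have h3 : (δ / (2 * (‖h'‖ + 1))) * ‖h'‖ ≤ δ / 2 := by
        rw [div_mul_eq_mul_div, div_le_div_iff₀ (by positivity) (by norm_num)]
        nlinarith
      linarith
    set ε : ℝ := min (t * M / 2) (δ / 2) with hεdef
    have hε : 0 < ε := lt_min (by positivity) (by linarith)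
    -- the pointwise bound
    have hbound : ∀ x : Ω, ‖f x - (t : ℂ) * h' x‖ ≤ M - ε := by
      intro x
      rcases le_or_gt (‖f x‖) (M - δ) with hle | hgt
      · have h1 : ‖f x - (t : ℂ) * h' x‖ ≤ ‖f x‖ + ‖(t : ℂ) * h' x‖ := norm_sub_le _ _
        have h2 : ‖(t : ℂ) * h' x‖ = t * ‖h' x‖ := by
          rw [norm_mul, Complex.norm_real, Real.norm_eq_abs, abs_of_pos ht0]
        have h3 : t * ‖h' x‖ ≤ t * ‖h'‖ :=
          mul_le_mul_of_nonneg_left (h'.norm_coe_le_norm x) (le_of_lt ht0)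
        have h4 : ε ≤ δ / 2 := min_le_right _ _
        linarith
      · obtain ⟨hU1, hU2⟩ := hδU x hgt
        have hid : f x - (t : ℂ) * h' x
            = ((1 - t : ℝ) : ℂ) * f x + (t : ℂ) * (f x - h' x) := by
          push_cast
          ring
        have h1 : ‖f x - (t : ℂ) * h' x‖
            ≤ ‖((1 - t : ℝ) : ℂ) * f x‖ + ‖(t : ℂ) * (f x - h' x)‖ := by
          rw [hid]; exact norm_add_le _ _
        have h2 : ‖((1 - t : ℝ) : ℂ) * f x‖ = (1 - t) * ‖f x‖ := by
          rw [norm_mul, Complex.norm_real, Real.norm_eq_abs, abs_of_pos (by linarith)]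
        have h3 : ‖(t : ℂ) * (f x - h' x)‖ = t * ‖f x - h' x‖ := by
          rw [norm_mul, Complex.norm_real, Real.norm_eq_abs, abs_of_pos ht0]
        have h4 : ‖f x - h' x‖ ≤ ‖f x - f x₀‖ + ‖h' x - f x₀‖ := by
          have : f x - h' x = (f x - f x₀) + (f x₀ - h' x) := by ring
          rw [this]
          have := norm_add_le (f x - f x₀) (f x₀ - h' x)
          rw [norm_sub_rev (f x₀) (h' x)] at this
          exact this
        have h5 : ‖f x‖ ≤ M := by simpa using f.norm_coe_le_norm x
        have h6 : (1 - t) * ‖f x‖ ≤ (1 - t) * M :=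
          mul_le_mul_of_nonneg_left h5 (by linarith)
        have h7 : t * ‖f x - h' x‖ ≤ t * (M / 4 + M / 4) := by
          apply mul_le_mul_of_nonneg_left _ (le_of_lt ht0)
          linarith
        have h8 : ε ≤ t * M / 2 := min_le_left _ _
        calc ‖f x - (t : ℂ) * h' x‖ ≤ (1 - t) * ‖f x‖ + t * ‖f x - h' x‖ := by
              rw [← h2, ← h3]; exact h1
          _ ≤ (1 - t) * M + t * (M / 4 + M / 4) := by linarith
          _ = M - t * M / 2 := by ring
          _ ≤ M - ε := by linarith
    -- assemble the contradiction
    set w : Ω →ᵇ ℂ := (-(t : ℂ) * c) • h with hwdef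
    have hwB : w ∈ B := B.smul_mem _ hB
    have hnorm : ‖f + w‖ ≤ M - ε := by
      rw [BoundedContinuousFunction.norm_le (by
        have h8 : ε ≤ t * M / 2 := min_le_left _ _
        nlinarith)]
      intro x
      have : (f + w) x = f x - (t : ℂ) * h' x := by
        simp only [hwdef, hh'def, BoundedContinuousFunction.coe_add,
          BoundedContinuousFunction.coe_smul, Pi.add_apply, Pi.smul_apply, smul_eq_mul]
        ring
      rw [this]
      exact hbound x
    have := horth w hwB
    linarith
  · -- easy direction
    intro hv h hB
    calc ‖f‖ = ‖f x₀‖ := hnorm_x₀.symm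
      _ = ‖(f + h) x₀‖ := by simp [hv h hB]
      _ ≤ ‖f + h‖ := (f + h).norm_coe_le_norm x₀
end

section
/- Let Ω be a locally compact Hausdorff space and let C_0(Ω) be the C*-algebra of continuous complex-valued functions on Ω vanishing at infinity, with the supremum norm. A function f ∈ C_0(Ω) with ‖f‖_∞ = 1 is a smooth point of the unit ball of C_0(Ω) if and only if |f(x)| = 1 for exactly one point x ∈ Ω. -/
open ZeroAtInfty Filter Set

namespace SmoothC0Aux
variable {Ω : Type*} [TopologicalSpace Ω]

lemma norm_apply_le (f : C₀(Ω, ℂ)) (x : Ω) : ‖f x‖ ≤ ‖f‖ := by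
  rw [← ZeroAtInftyContinuousMap.norm_toBCF_eq_norm]
  exact f.toBCF.norm_coe_le_norm x

lemma norm_le_of (f : C₀(Ω, ℂ)) {C : ℝ} (hC : 0 ≤ C) (h : ∀ x, ‖f x‖ ≤ C) : ‖f‖ ≤ C := by
  rw [← ZeroAtInftyContinuousMap.norm_toBCF_eq_norm]
  exact (BoundedContinuousFunction.norm_le hC).2 h

lemma small_outside (f : C₀(Ω, ℂ)) :
    ∃ K : Set Ω, IsCompact K ∧ ∀ x ∉ K, ‖f x‖ < 1/2 := by
  have h : Tendsto f (cocompact Ω) (nhds 0) := zero_at_infty f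
  have h2 : ∀ᶠ x in cocompact Ω, ‖f x‖ < 1/2 := by
    have := Metric.tendsto_nhds.mp h (1/2) (by norm_num)
    simpa [dist_eq_norm] using this
  obtain ⟨K, hK, hsub⟩ := mem_cocompact.mp h2
  exact ⟨K, hK, fun x hx => hsub hx⟩

lemma key (f : C₀(Ω, ℂ)) (hf : ‖f‖ = 1) (x₀ : Ω)
    (huniq : ∀ y, ‖f y‖ = 1 → y = x₀) (G : C₀(Ω, ℂ) →L[ℂ] ℂ)
    (hG : ‖G‖ ≤ 1) (hGf : G f = 1) (g : C₀(Ω, ℂ)) (hg : g x₀ = 0) : G g = 0 := by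
  have main : ∀ ε : ℝ, 0 < ε → ‖G g‖ ≤ ε := by
    intro ε hε
    set U : Set Ω := {x | ‖g x‖ < ε} with hUdef
    have hUopen : IsOpen U := isOpen_lt (continuous_norm.comp (map_continuous g)) continuous_const
    have hx₀U : x₀ ∈ U := by simp [hUdef, hg, hε]
    obtain ⟨K, hK, hout⟩ := small_outside f
    obtain ⟨m, hm0, hm1, hmC⟩ : ∃ m : ℝ, 0 ≤ m ∧ m < 1 ∧ ∀ x ∉ U, ‖f x‖ ≤ m := by
      by_cases hne : (K ∩ Uᶜ).Nonempty
      · obtain ⟨y, hy, hymax⟩ := (hK.inter_right hUopen.isClosed_compl).exists_isMaxOn hne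
          ((continuous_norm.comp (map_continuous f)).continuousOn)
        refine ⟨max ‖f y‖ (1/2), le_max_of_le_right (by norm_num), ?_, ?_⟩
        · have hne1 : ‖f y‖ ≠ 1 := fun h => hy.2 (huniq y h ▸ hx₀U)
          exact max_lt (lt_of_le_of_ne (hf ▸ norm_apply_le f y) hne1) (by norm_num)
        · intro x hx
          by_cases hxK : x ∈ K
          · exact le_max_of_le_left (hymax ⟨hxK, hx⟩)
          · exact le_max_of_le_right (hout x hxK).le
      · refine ⟨1/2, by norm_num, by norm_num, fun x hx => ?_⟩
        by_cases hxK : x ∈ K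
        · exact absurd ⟨hxK, hx⟩ (fun h => hne ⟨x, h⟩)
        · exact (hout x hxK).le
    set c : ℂ := G g with hc
    by_cases hc0 : c = 0
    · simp [hc0]; linarith
    have hcpos : 0 < ‖c‖ := norm_pos_iff.mpr hc0
    set s : ℝ := (1 - m) / (‖g‖ + 1) with hs
    have hgpos : 0 < ‖g‖ + 1 := by positivity
    have hspos : 0 < s := div_pos (by linarith) hgpos
    set t : ℂ := ((s / ‖c‖ : ℝ) : ℂ) * (starRingEnd ℂ c) with ht
    have hnt : ‖t‖ = s := by
      have hane : ‖c‖ ≠ 0 := ne_of_gt hcpos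
      rw [ht, norm_mul, Complex.norm_real, RCLike.norm_conj, Real.norm_eq_abs,
        abs_of_nonneg (by positivity), div_mul_eq_mul_div, mul_div_assoc]
      rw [div_self (by simpa using hane), mul_one]
    have htc : t * c = ((s * ‖c‖ : ℝ) : ℂ) := by
      rw [ht, mul_assoc, Complex.conj_mul']
      rw [← Complex.ofReal_pow, ← Complex.ofReal_mul]
      congr 1
      have habs : ‖c‖ ≠ 0 := by simpa using ne_of_gt hcpos
      field_simp [habs]
    set h : C₀(Ω, ℂ) := f + t • g with hh
    have hbound : ‖h‖ ≤ 1 + s * ε := by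
      refine norm_le_of h (by positivity) fun x => ?_
      have hhx : h x = f x + t * g x := by simp [hh]
      rw [hhx]
      by_cases hxU : x ∈ U
      · calc ‖f x + t * g x‖ ≤ ‖f x‖ + ‖t‖ * ‖g x‖ := by
              simpa [norm_mul] using norm_add_le (f x) (t * g x)
          _ ≤ 1 + s * ε := by
              have h1 : ‖f x‖ ≤ 1 := hf ▸ norm_apply_le f x
              have h2 : ‖g x‖ ≤ ε := le_of_lt hxU
              have h3 := mul_le_mul_of_nonneg_left h2 (norm_nonneg t)
              rw [hnt] at h3
              rw [hnt]
              linarith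
      · calc ‖f x + t * g x‖ ≤ ‖f x‖ + ‖t‖ * ‖g x‖ := by
              simpa [norm_mul] using norm_add_le (f x) (t * g x)
          _ ≤ m + s * ‖g‖ := by
              have h2 : ‖g x‖ ≤ ‖g‖ := norm_apply_le g x
              have h3 := mul_le_mul_of_nonneg_left h2 (norm_nonneg t)
              rw [hnt] at h3
              rw [hnt]
              linarith [hmC x hxU]
          _ ≤ 1 := by
              have : s * ‖g‖ ≤ 1 - m := by
                rw [hs, div_mul_eq_mul_div, div_le_iff₀ hgpos]
                nlinarith [norm_nonneg g]
              linarith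
          _ ≤ 1 + s * ε := le_add_of_nonneg_right (by positivity)
    have hGh : G h = ((1 + s * ‖c‖ : ℝ) : ℂ) := by
      rw [hh, map_add, map_smul, hGf, smul_eq_mul, ← hc, htc]
      push_cast
      ring
    have hnormGh : ‖G h‖ = 1 + s * ‖c‖ := by
      rw [hGh, Complex.norm_real, Real.norm_eq_abs, abs_of_nonneg (by positivity)]
    have hle : ‖G h‖ ≤ ‖G‖ * ‖h‖ := G.le_opNorm h
    have : 1 + s * ‖c‖ ≤ 1 + s * ε := by
      rw [← hnormGh]
      calc ‖G h‖ ≤ ‖G‖ * ‖h‖ := hle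
        _ ≤ 1 * (1 + s * ε) := by
            apply mul_le_mul hG hbound (norm_nonneg h) zero_le_one
        _ = 1 + s * ε := one_mul _
    have := (mul_le_mul_iff_right₀ hspos).mp (by linarith : s * ‖c‖ ≤ s * ε)
    linarith
  by_contra h'
  have hp : 0 < ‖G g‖ := norm_pos_iff.mpr h'
  linarith [main (‖G g‖ / 2) (by linarith)]


/-- evaluation-type functional `g ↦ a * g x`. -/
noncomputable def evalF (a : ℂ) (x : Ω) : C₀(Ω, ℂ) →L[ℂ] ℂ :=
  LinearMap.mkContinuous
    { toFun := fun g => a * g x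
      map_add' := by intro g h; simp [mul_add]
      map_smul' := by intro c g; simp; ring }
    ‖a‖ (fun g => by
      simp only [LinearMap.coe_mk, AddHom.coe_mk, norm_mul]
      exact mul_le_mul_of_nonneg_left (norm_apply_le g x) (norm_nonneg a))

@[simp] lemma evalF_apply (a : ℂ) (x : Ω) (g : C₀(Ω, ℂ)) : evalF a x g = a * g x := rfl

lemma norm_evalF_le (a : ℂ) (x : Ω) : ‖evalF a x‖ ≤ ‖a‖ :=
  LinearMap.mkContinuous_norm_le _ (norm_nonneg a) _

lemma attain (f : C₀(Ω, ℂ)) (hf : ‖f‖ = 1) : ∃ x, ‖f x‖ = 1 := by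
  obtain ⟨K, hK, hout⟩ := small_outside f
  have hKne : K.Nonempty := by
    by_contra h
    rw [Set.not_nonempty_iff_eq_empty] at h
    have : ‖f‖ ≤ 1/2 := norm_le_of f (by norm_num) fun x => (hout x (by simp [h])).le
    linarith [hf ▸ this]
  obtain ⟨y, hyK, hy⟩ := hK.exists_isMaxOn hKne
    ((continuous_norm.comp (map_continuous f)).continuousOn)
  refine ⟨y, le_antisymm (hf ▸ norm_apply_le f y) ?_⟩
  have : ‖f‖ ≤ max ‖f y‖ (1/2) := by
    refine norm_le_of f (le_max_of_le_right (by norm_num)) fun x => ?_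
    by_cases hx : x ∈ K
    · exact le_max_of_le_left (hy hx)
    · exact le_max_of_le_right (hout x hx).le
  rcases max_cases ‖f y‖ (1/2 : ℝ) with ⟨he, _⟩ | ⟨he, _⟩
  · linarith [hf ▸ (he ▸ this)]
  · linarith [hf ▸ (he ▸ this)]

lemma evalF_prop (f : C₀(Ω, ℂ)) (hf : ‖f‖ = 1) (x : Ω) (hx : ‖f x‖ = 1) :
    ‖evalF (starRingEnd ℂ (f x)) x‖ = 1 ∧ evalF (starRingEnd ℂ (f x)) x f = 1 := by
  have happ : evalF (starRingEnd ℂ (f x)) x f = 1 := by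
    rw [evalF_apply, Complex.conj_mul', hx]
    norm_num
  refine ⟨le_antisymm ?_ ?_, happ⟩
  · simpa [RCLike.norm_conj, hx] using norm_evalF_le (starRingEnd ℂ (f x)) x
  · have := (evalF (starRingEnd ℂ (f x)) x).le_opNorm f
    rw [happ, hf, mul_one] at this
    simpa using this
end SmoothC0Aux

open SmoothC0Aux in
/-- A norm-one function `f ∈ C₀(Ω)`, for `Ω` a locally compact Hausdorff space, is a
smooth point of the unit ball of `C₀(Ω)` iff `|f|` attains the value `1` at exactly
one point. -/
theorem smooth_point_c0
    {Ω : Type*} [TopologicalSpace Ω] [LocallyCompactSpace Ω] [T2Space Ω]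
    (f : C₀(Ω, ℂ)) (hf : ‖f‖ = 1) :
    (∃! F : C₀(Ω, ℂ) →L[ℂ] ℂ, ‖F‖ = 1 ∧ F f = 1) ↔
      ∃! x : Ω, ‖f x‖ = 1 := by
  constructor
  · rintro ⟨F, _, hFuniq⟩
    obtain ⟨x, hx⟩ := attain f hf
    refine ⟨x, by simpa using hx, fun y hy' => ?_⟩
    have hy : ‖f y‖ = 1 := by exact hy'
    by_contra hne
    -- bump function: 1 at y, 0 at x
    obtain ⟨b, hb1, hb0, hbsupp, -⟩ := exists_continuous_one_zero_of_isCompact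
      (isCompact_singleton : IsCompact {y}) (isClosed_singleton : IsClosed {x})
      (by simpa using hne)
    let gc : C(Ω, ℂ) := ⟨fun z => ((b z : ℝ) : ℂ), Complex.continuous_ofReal.comp b.continuous⟩
    have hcs : HasCompactSupport (gc : Ω → ℂ) :=
      hbsupp.comp_left (g := fun r : ℝ => (r : ℂ)) (by simp)
    let g : C₀(Ω, ℂ) := ⟨gc, hcs.is_zero_at_infty⟩
    have hgx : g x = 0 := by
      have := hb0 (mem_singleton x); simp only [Pi.zero_apply] at this
      simp [g, gc, this]
    have hgy : g y = 1 := by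
      have := hb1 (mem_singleton y); simp only [Pi.one_apply] at this
      simp [g, gc, this]
    have hx' := evalF_prop f hf x hx
    have hy'' := evalF_prop f hf y hy
    have hEx : evalF (starRingEnd ℂ (f x)) x = F := hFuniq _ hx'
    have hEy : evalF (starRingEnd ℂ (f y)) y = F := hFuniq _ hy''
    have : evalF (starRingEnd ℂ (f x)) x g = evalF (starRingEnd ℂ (f y)) y g := by
      rw [hEx, hEy]
    rw [evalF_apply, evalF_apply, hgx, hgy, mul_zero, mul_one] at this
    have : f y = 0 := by
      have h0 := congrArg (starRingEnd ℂ) this.symm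
      simpa using h0
    rw [this] at hy
    simp at hy
  · rintro ⟨x₀, hx₀', huniq'⟩
    have hx₀ : ‖f x₀‖ = 1 := by exact hx₀'
    have huniq : ∀ y, ‖f y‖ = 1 → y = x₀ := fun y hy =>
      huniq' y (by simpa using hy)
    have hprop := evalF_prop f hf x₀ hx₀
    refine ⟨evalF (starRingEnd ℂ (f x₀)) x₀, hprop, ?_⟩
    rintro G ⟨hG1, hGf⟩
    have hfx₀ne : f x₀ ≠ 0 := fun h => by rw [h] at hx₀; simp at hx₀
    have hconj : starRingEnd ℂ (f x₀) = (f x₀)⁻¹ := by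
      have hns : Complex.normSq (f x₀) = 1 := by
        rw [Complex.normSq_eq_norm_sq, hx₀]
        norm_num
      rw [Complex.inv_def, hns]
      simp
    refine ContinuousLinearMap.ext fun g => ?_
    have hg' : (g - (g x₀ / f x₀) • f) x₀ = 0 := by
      simp only [ZeroAtInftyContinuousMap.sub_apply, ZeroAtInftyContinuousMap.smul_apply,
        smul_eq_mul]
      field_simp
      ring
    have hkey := key f hf x₀ huniq G hG1.le hGf _ hg'
    rw [map_sub, map_smul, hGf, smul_eq_mul, mul_one, sub_eq_zero] at hkey
    rw [hkey, evalF_apply, hconj]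
    ring
end

section
/- Let Ω be a locally compact Hausdorff space, let C_b(Ω) be the C*-algebra of bounded continuous complex-valued functions on Ω with the supremum norm, and let C_0(Ω) ⊆ C_b(Ω) be the ideal of functions vanishing at infinity. Let f ∈ C_b(Ω) satisfy dist(f, C_0(Ω)) < ‖f‖_∞. Then for any g ∈ C_b(Ω), lim_{t→0⁺} (‖f + t·g‖_∞ − ‖f‖_∞)/t = sup{ Re( conj(f(x)) · g(x) ) / ‖f‖_∞ : x ∈ Ω, |f(x)| = ‖f‖_∞ }. -/
open Filter BoundedContinuousFunction ZeroAtInfty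

set_option maxHeartbeats 2000000 in
/-- Let `Ω` be a locally compact Hausdorff space and `f ∈ C_b(Ω)` with
`dist(f, C₀(Ω)) < ‖f‖_∞`.  Then for any `g ∈ C_b(Ω)`,
`lim_{t→0⁺} (‖f + t g‖_∞ - ‖f‖_∞)/t
  = sup { Re(conj(f x) · g x) / ‖f‖_∞ : x ∈ Ω, |f x| = ‖f‖_∞ }`. -/
theorem gateaux_derivative_cb_norm
    {Ω : Type*} [TopologicalSpace Ω] [LocallyCompactSpace Ω] [T2Space Ω]
    (f : Ω →ᵇ ℂ)
    (hdist : Metric.infDist f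
      (Set.range (ZeroAtInftyContinuousMap.toBCF : C₀(Ω, ℂ) → Ω →ᵇ ℂ)) < ‖f‖)
    (g : Ω →ᵇ ℂ) :
    Tendsto (fun t : ℝ => (‖f + t • g‖ - ‖f‖) / t)
      (nhdsWithin 0 (Set.Ioi 0))
      (nhds (sSup {r : ℝ | ∃ x : Ω, ‖f x‖ = ‖f‖ ∧
        r = ((starRingEnd ℂ) (f x) * g x).re / ‖f‖})) := by
  set M := ‖f‖ with hMdef
  have hM0 : 0 < M := lt_of_le_of_lt Metric.infDist_nonneg hdist
  set T : Set ℝ := {r : ℝ | ∃ x : Ω, ‖f x‖ = M ∧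
      r = ((starRingEnd ℂ) (f x) * g x).re / M} with hTdef
  -- basic facts
  have habs : ∀ x : Ω, ‖f x‖ = ‖f x‖ := fun x => rfl
  have hfle : ∀ x : Ω, ‖f x‖ ≤ M := fun x => by
    rw [habs]; exact f.norm_coe_le_norm x
  -- evaluation of f + t • g
  have heval : ∀ (t : ℝ) (x : Ω), (f + t • g) x = f x + (t : ℂ) * g x := by
    intro t x
    simp [Complex.real_smul]
  -- key real-part identity
  have hre : ∀ (t : ℝ) (x : Ω),
      ((starRingEnd ℂ) (f x) * (f x + (t : ℂ) * g x)).re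
        = ‖f x‖ ^ 2 + t * ((starRingEnd ℂ) (f x) * g x).re := by
    intro t x
    simp only [Complex.sq_norm]
    simp only [Complex.normSq_apply, Complex.mul_re, Complex.mul_im, Complex.add_re,
      Complex.add_im, Complex.conj_re, Complex.conj_im, Complex.ofReal_re, Complex.ofReal_im]
    ring
  -- norm-squared expansion
  have hnsq : ∀ (t : ℝ) (x : Ω),
      ‖f x + (t : ℂ) * g x‖ ^ 2
        = ‖f x‖ ^ 2 + 2 * t * ((starRingEnd ℂ) (f x) * g x).re
          + t ^ 2 * ‖g x‖ ^ 2 := by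
    intro t x
    simp only [Complex.sq_norm]
    simp only [Complex.normSq_apply, Complex.mul_re, Complex.mul_im, Complex.add_re,
      Complex.add_im, Complex.conj_re, Complex.conj_im, Complex.ofReal_re, Complex.ofReal_im]
    ring
  -- Step A : compact K and δ > 0 with |f x| ≤ M - δ outside K
  obtain ⟨y, hymem, hy⟩ := (Metric.infDist_lt_iff
    ⟨ZeroAtInftyContinuousMap.toBCF (0 : C₀(Ω, ℂ)), Set.mem_range_self _⟩).mp hdist
  obtain ⟨h₀, rfl⟩ := hymem
  set δ : ℝ := (M - dist f h₀.toBCF) / 2 with hδdef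
  have hδ0 : 0 < δ := by simp only [hδdef]; linarith
  have hδM : dist f h₀.toBCF ≤ M - 2 * δ := by simp only [hδdef]; linarith
  obtain ⟨K, hK, hKsub⟩ := Filter.mem_cocompact.mp
    ((zero_at_infty h₀).eventually (Metric.ball_mem_nhds (0 : ℂ) hδ0))
  have hout : ∀ x : Ω, x ∉ K → ‖f x‖ ≤ M - δ := by
    intro x hx
    have h1 : ‖f x - h₀.toBCF x‖ ≤ dist f h₀.toBCF := by
      rw [dist_eq_norm]
      exact (f - h₀.toBCF).norm_coe_le_norm x
    have h2 : ‖(h₀ : Ω → ℂ) x‖ < δ := by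
      have := hKsub hx
      simpa [Metric.mem_ball, dist_eq_norm] using this
    have h3 : ‖f x‖ ≤ ‖f x - h₀.toBCF x‖ + ‖h₀.toBCF x‖ := by
      simpa using norm_add_le (f x - h₀.toBCF x) (h₀.toBCF x)
    have h4 : (h₀.toBCF : Ω → ℂ) x = h₀ x := rfl
    rw [habs]
    rw [h4] at h1 h3
    linarith
  -- Step B : the sup is attained at some x₀
  have hKne : K.Nonempty := by
    by_contra hne
    rw [Set.not_nonempty_iff_eq_empty] at hne
    have h5 : (0:ℝ) ≤ dist f h₀.toBCF := dist_nonneg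
    have : M ≤ M - δ := by
      refine (norm_le (by rw [hδdef]; linarith)).mpr fun x => ?_
      rw [← habs]
      exact hout x (by simp [hne])
    linarith
  obtain ⟨x₀, hx₀K, hx₀max⟩ := hK.exists_isMaxOn hKne
    ((continuous_norm.comp f.continuous).continuousOn)
  have hx₀ : ‖f x₀‖ = M := by
    refine le_antisymm (hfle x₀) ?_
    have hub : ∀ x : Ω, ‖f x‖ ≤ max (‖f x₀‖) (M - δ) := by
      intro x
      rw [← habs]
      by_cases hx : x ∈ K
      · exact le_max_of_le_left (hx₀max hx)
      · exact le_max_of_le_right (hout x hx)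
    have : M ≤ max (‖f x₀‖) (M - δ) := by
      rw [hMdef]
      exact (norm_le (le_max_of_le_left (norm_nonneg _))).mpr hub
    rcases le_max_iff.mp this with h | h
    · exact h
    · linarith
  -- T is nonempty and bounded above
  have hTne : T.Nonempty := ⟨_, ⟨x₀, hx₀, rfl⟩⟩
  have hTbdd : BddAbove T := by
    refine ⟨‖g‖, fun r hr => ?_⟩
    obtain ⟨x, hxM, rfl⟩ := hr
    rw [div_le_iff₀ hM0]
    calc ((starRingEnd ℂ) (f x) * g x).re ≤ ‖(starRingEnd ℂ) (f x) * g x‖ :=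
          Complex.re_le_norm _
      _ = ‖f x‖ * ‖g x‖ := by
          rw [norm_mul, Complex.norm_conj]
      _ = M * ‖g x‖ := by rw [hxM]
      _ ≤ M * ‖g‖ := by
          refine mul_le_mul_of_nonneg_left ?_ hM0.le
          exact g.norm_coe_le_norm x
      _ = ‖g‖ * M := mul_comm _ _
  set R : ℝ := sSup T with hRdef
  -- lower bound : for all t > 0, R ≤ (‖f + t•g‖ - M)/t
  have hlow : ∀ t : ℝ, 0 < t → R ≤ (‖f + t • g‖ - M) / t := by
    intro t ht
    refine csSup_le hTne fun r hr => ?_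
    obtain ⟨x, hxM, rfl⟩ := hr
    rw [div_le_div_iff₀ hM0 ht]
    have key : M * (M + t * (((starRingEnd ℂ) (f x) * g x).re / M))
        ≤ M * ‖f x + (t : ℂ) * g x‖ := by
      have h1 : ((starRingEnd ℂ) (f x) * (f x + (t : ℂ) * g x)).re
          ≤ ‖(starRingEnd ℂ) (f x)‖ * ‖f x + (t : ℂ) * g x‖ := by
        calc _ ≤ ‖(starRingEnd ℂ) (f x) * (f x + (t : ℂ) * g x)‖ :=
              Complex.re_le_norm _
          _ = _ := norm_mul _ _
      rw [Complex.norm_conj, hxM] at h1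
      rw [hre t x, hxM] at h1
      have : M * (M + t * (((starRingEnd ℂ) (f x) * g x).re / M))
          = M ^ 2 + t * ((starRingEnd ℂ) (f x) * g x).re := by
        field_simp
      linarith [h1, this.le, this.ge]
    have key2 : M + t * (((starRingEnd ℂ) (f x) * g x).re / M)
        ≤ ‖f x + (t : ℂ) * g x‖ :=
      le_of_mul_le_mul_left key hM0
    have key3 : ‖f x + (t : ℂ) * g x‖ ≤ ‖f + t • g‖ := by
      rw [← heval t x]
      exact (f + t • g).norm_coe_le_norm x
    have key4 : M * ‖f x + (t : ℂ) * g x‖ ≤ M * ‖f + t • g‖ :=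
      mul_le_mul_of_nonneg_left key3 hM0.le
    have key5 : M ^ 2 + t * ((starRingEnd ℂ) (f x) * g x).re ≤ M * ‖f + t • g‖ := by
      calc M ^ 2 + t * ((starRingEnd ℂ) (f x) * g x).re
          = M * (M + t * (((starRingEnd ℂ) (f x) * g x).re / M)) := by field_simp
        _ ≤ M * ‖f x + (t : ℂ) * g x‖ := key
        _ ≤ M * ‖f + t • g‖ := key4
    nlinarith [key5]
  -- upper bound : for all ε > 0 there is t₀ > 0 such that ...
  have hupp : ∀ ε : ℝ, 0 < ε → ∃ t₀ : ℝ, 0 < t₀ ∧ ∀ t : ℝ, 0 < t → t < t₀ →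
      (‖f + t • g‖ - M) / t ≤ R + ε := by
    intro ε hε
    set V : Set Ω := K ∩ {x : Ω | M * (R + ε / 2) ≤ ((starRingEnd ℂ) (f x) * g x).re}
      with hVdef
    have hVcomp : IsCompact V := hK.inter_right <| isClosed_le continuous_const <| by
      exact (Complex.continuous_re.comp
        (((Complex.continuous_conj.comp f.continuous)).mul g.continuous))
    have hVlt : ∀ x ∈ V, ‖f x‖ < M := by
      intro x hx
      rcases lt_or_eq_of_le (hfle x) with h | h
      · exact h
      · exfalso
        have hmem : ((starRingEnd ℂ) (f x) * g x).re / M ∈ T := ⟨x, h, rfl⟩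
        have hle : ((starRingEnd ℂ) (f x) * g x).re / M ≤ R := le_csSup hTbdd hmem
        have := hx.2
        rw [Set.mem_setOf_eq] at this
        rw [div_le_iff₀ hM0] at hle
        nlinarith
    -- δ' > 0 with |f x| ≤ M - δ' on V
    obtain ⟨δ', hδ'0, hδ'⟩ : ∃ δ' : ℝ, 0 < δ' ∧ ∀ x ∈ V, ‖f x‖ ≤ M - δ' := by
      rcases V.eq_empty_or_nonempty with hVe | hVne
      · exact ⟨M, hM0, fun x hx => by rw [hVe] at hx; exact absurd hx (Set.notMem_empty x)⟩
      · obtain ⟨z, hzV, hzmax⟩ := hVcomp.exists_isMaxOn hVne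
          ((continuous_norm.comp f.continuous).continuousOn)
        refine ⟨M - ‖f z‖, by linarith [hVlt z hzV], fun x hx => ?_⟩
        have h6 := hzmax hx
        simp only [Set.mem_setOf_eq, Function.comp_apply] at h6
        linarith
    -- choose t₀
    set c : ℝ := |R + ε| + |‖g‖ - (R + ε)| + |‖g‖ ^ 2 - (R + ε) ^ 2| + 1 with hcdef
    have hc0 : 0 < c := by positivity
    refine ⟨min (M / 2 / c) (min (δ / c) (min (δ' / c) (M * ε / c))), by positivity, ?_⟩
    intro t ht htlt
    have htc1 : t * c < M / 2 := by
      have := lt_of_lt_of_le htlt (min_le_left _ _)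
      rw [lt_div_iff₀ hc0] at this
      linarith
    have htc2 : t * c < δ := by
      have := lt_of_lt_of_le htlt ((min_le_right _ _).trans (min_le_left _ _))
      rw [lt_div_iff₀ hc0] at this
      linarith
    have htc3 : t * c < δ' := by
      have := lt_of_lt_of_le htlt
        ((min_le_right _ _).trans ((min_le_right _ _).trans (min_le_left _ _)))
      rw [lt_div_iff₀ hc0] at this
      linarith
    have htc4 : t * c < M * ε := by
      have := lt_of_lt_of_le htlt
        ((min_le_right _ _).trans ((min_le_right _ _).trans (min_le_right _ _)))
      rw [lt_div_iff₀ hc0] at this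
      linarith
    -- bounds from c
    have hb1 : t * (R + ε) ≥ -(M / 2) := by
      have h1 : -(R + ε) ≤ c := by
        have := abs_nonneg (‖g‖ - (R + ε)); have := abs_nonneg (‖g‖ ^ 2 - (R + ε) ^ 2)
        have := neg_abs_le (R + ε)
        simp only [hcdef]; linarith
      nlinarith
    have hb2 : t * (‖g‖ - (R + ε)) < δ := by
      have h1 : ‖g‖ - (R + ε) ≤ c := by
        have := abs_nonneg (R + ε); have := abs_nonneg (‖g‖ ^ 2 - (R + ε) ^ 2)
        have := le_abs_self (‖g‖ - (R + ε))
        simp only [hcdef]; linarith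
      nlinarith
    have hb3 : t * (‖g‖ - (R + ε)) < δ' := by
      have h1 : ‖g‖ - (R + ε) ≤ c := by
        have := abs_nonneg (R + ε); have := abs_nonneg (‖g‖ ^ 2 - (R + ε) ^ 2)
        have := le_abs_self (‖g‖ - (R + ε))
        simp only [hcdef]; linarith
      nlinarith
    have hb4 : t * (‖g‖ ^ 2 - (R + ε) ^ 2) < M * ε := by
      have h1 : ‖g‖ ^ 2 - (R + ε) ^ 2 ≤ c := by
        have := abs_nonneg (R + ε); have := abs_nonneg (‖g‖ - (R + ε))
        have := le_abs_self (‖g‖ ^ 2 - (R + ε) ^ 2)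
        simp only [hcdef]; linarith
      nlinarith
    have hMt : (0:ℝ) ≤ M + t * (R + ε) := by linarith
    -- pointwise bound
    have hpt : ∀ x : Ω, ‖(f + t • g) x‖ ≤ M + t * (R + ε) := by
      intro x
      rw [heval t x]
      have hgx : ‖g x‖ ≤ ‖g‖ := by
        exact g.norm_coe_le_norm x
      have htri : ‖f x + (t : ℂ) * g x‖
          ≤ ‖f x‖ + t * ‖g x‖ := by
        calc ‖f x + (t : ℂ) * g x‖
            ≤ ‖f x‖ + ‖(t : ℂ) * g x‖ := norm_add_le _ _
          _ = ‖f x‖ + |t| * ‖g x‖ := by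
              rw [norm_mul, Complex.norm_real, Real.norm_eq_abs]
          _ = _ := by rw [abs_of_pos ht]
      by_cases hxK : x ∈ K
      · by_cases hxV : x ∈ V
        · -- on V : |f x| ≤ M - δ'
          have := hδ' x hxV
          nlinarith [mul_le_mul_of_nonneg_left hgx ht.le]
        · -- on K \ V : re part is small
          have hxre : ((starRingEnd ℂ) (f x) * g x).re < M * (R + ε / 2) := by
            by_contra hcon
            exact hxV ⟨hxK, by rw [Set.mem_setOf_eq]; linarith⟩
          have hsq := hnsq t x
          have h1 : ‖f x + (t : ℂ) * g x‖ ^ 2 ≤ (M + t * (R + ε)) ^ 2 := by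
            rw [hsq]
            have hfx := hfle x
            have hfx0 := norm_nonneg (f x)
            have h2 : 2 * t * ((starRingEnd ℂ) (f x) * g x).re
                ≤ 2 * t * (M * (R + ε / 2)) := by nlinarith
            have h3 : ‖f x‖ ^ 2 ≤ M ^ 2 := by nlinarith
            have h4 : t ^ 2 * ‖g x‖ ^ 2 ≤ t ^ 2 * ‖g‖ ^ 2 := by
              have h0 : (0:ℝ) ≤ ‖g x‖ := norm_nonneg _
              nlinarith [mul_le_mul hgx hgx h0 (norm_nonneg g), sq_nonneg t]
            have h5 : t * (t * (‖g‖ ^ 2 - (R + ε) ^ 2)) ≤ t * (M * ε) :=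
              mul_le_mul_of_nonneg_left hb4.le ht.le
            nlinarith [h2, h3, h4, h5]
          nlinarith [norm_nonneg (f x + (t : ℂ) * g x)]
      · -- outside K : |f x| ≤ M - δ
        have := hout x hxK
        nlinarith [mul_le_mul_of_nonneg_left hgx ht.le]
    have hnorm : ‖f + t • g‖ ≤ M + t * (R + ε) := (norm_le hMt).mpr hpt
    rw [div_le_iff₀ ht]
    linarith
  -- conclude
  rw [Metric.tendsto_nhds]
  intro ε hε
  obtain ⟨t₀, ht₀, hupp'⟩ := hupp (ε / 2) (by linarith)
  filter_upwards [Ioo_mem_nhdsGT_of_mem (Set.left_mem_Ico.2 ht₀)] with t ht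
  have h1 := hlow t ht.1
  have h2 := hupp' t ht.1 ht.2
  rw [Real.dist_eq, abs_sub_lt_iff]
  constructor <;> linarith
end

section
/- Let A be a complex C*-algebra, let I be a closed two-sided ideal of A, and let a ∈ A be nonzero with dist(a, I) < ‖a‖. If ψ is a bounded linear functional on A with ‖ψ‖ = 1 and ψ(a* a) = ‖a‖², then the restriction of ψ to I has norm one, i.e. ‖ψ|_I‖ = ‖ψ‖ = 1. -/
open Polynomial Metric

section aux

variable {A : Type*} [CStarAlgebra A]

lemma real_smul_mem_aux (I : Submodule ℂ A) (r : ℝ) {x : A} (hx : x ∈ I) : r • x ∈ I := by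
  have h : r • x = (r : ℂ) • x := by
    rw [← smul_one_smul ℂ r x]
    congr 1
    simp
  rw [h]
  exact I.smul_mem _ hx

lemma aeval_diff_mem_aux (I : Submodule ℂ A) {u v : A}
    (h : ∀ n : ℕ, u ^ n - v ^ n ∈ I) (p : ℝ[X]) :
    Polynomial.aeval u p - Polynomial.aeval v p ∈ I := by
  rw [Polynomial.aeval_eq_sum_range, Polynomial.aeval_eq_sum_range, ← Finset.sum_sub_distrib]
  refine Submodule.sum_mem I fun n _ => ?_
  rw [← smul_sub]
  exact real_smul_mem_aux I _ (h n)

lemma cfc_diff_mem_aux [Nontrivial A] (I : Submodule ℂ A) (hI_closed : IsClosed (I : Set A))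
    {u v : A} (hu : IsSelfAdjoint u) (hv : IsSelfAdjoint v)
    (h : ∀ n : ℕ, u ^ n - v ^ n ∈ I) {g : ℝ → ℝ} (hg : Continuous g) :
    cfc g u - cfc g v ∈ I := by
  set M : ℝ := max ‖u‖ ‖v‖ with hM
  set G : C(Set.Icc (-M) M, ℝ) := (ContinuousMap.mk g hg).restrict (Set.Icc (-M) M) with hG
  have key : ∀ w : A, IsSelfAdjoint w → ‖w‖ ≤ M → ∀ p : ℝ[X],
      ‖cfc g w - Polynomial.aeval w p‖ ≤ ‖p.toContinuousMapOn (Set.Icc (-M) M) - G‖ := by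
    intro w hw hwM p
    have h1 : cfc g w - Polynomial.aeval w p = cfc (fun x : ℝ => g x - p.eval x) w := by
      rw [cfc_sub g (fun x : ℝ => p.eval x) w hg.continuousOn (p.continuous_aeval.continuousOn), cfc_polynomial p w hw]
    rw [h1]
    refine norm_cfc_le (norm_nonneg _) fun x hx => ?_
    have hxw : |x| ≤ ‖w‖ := by
      simpa [Real.norm_eq_abs] using spectrum.norm_le_norm_of_mem hx
    have hx' : x ∈ Set.Icc (-M) M := by
      obtain ⟨h1', h2'⟩ := abs_le.mp hxw
      exact ⟨by linarith, by linarith⟩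
    calc ‖g x - p.eval x‖ = ‖(p.toContinuousMapOn (Set.Icc (-M) M) - G) ⟨x, hx'⟩‖ := by
          rw [norm_sub_rev]
          simp [G, Polynomial.toContinuousMapOn, Polynomial.toContinuousMap]
      _ ≤ ‖p.toContinuousMapOn (Set.Icc (-M) M) - G‖ := (p.toContinuousMapOn _ - G).norm_coe_le_norm _
  have hcl : cfc g u - cfc g v ∈ closure (I : Set A) := by
    rw [Metric.mem_closure_iff]
    intro ε hε
    obtain ⟨p, hp⟩ := exists_polynomial_near_continuousMap (-M) M G (ε/2) (by positivity)
    refine ⟨Polynomial.aeval u p - Polynomial.aeval v p, aeval_diff_mem_aux I h p, ?_⟩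
    rw [dist_eq_norm]
    have h1 := key u hu (le_max_left _ _) p
    have h2 := key v hv (le_max_right _ _) p
    calc ‖cfc g u - cfc g v - (Polynomial.aeval u p - Polynomial.aeval v p)‖
        = ‖(cfc g u - Polynomial.aeval u p) - (cfc g v - Polynomial.aeval v p)‖ := by
          rw [sub_sub_sub_comm]
      _ ≤ ‖cfc g u - Polynomial.aeval u p‖ + ‖cfc g v - Polynomial.aeval v p‖ := norm_sub_le _ _
      _ < ε := by linarith
  rwa [hI_closed.closure_eq] at hcl

lemma cfc_mem_aux [Nontrivial A] (I : Submodule ℂ A) (hI_closed : IsClosed (I : Set A))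
    (hI_right : ∀ x ∈ I, ∀ y : A, x * y ∈ I)
    {z : A} (hz : IsSelfAdjoint z) (hzI : z ∈ I)
    {g : ℝ → ℝ} (hg : Continuous g) (hg0 : g 0 = 0) : cfc g z ∈ I := by
  have hpow : ∀ n : ℕ, z ^ n - (0 : A) ^ n ∈ I := by
    intro n
    match n with
    | 0 => simpa using I.zero_mem
    | (k+1) =>
      rw [zero_pow (Nat.succ_ne_zero k), sub_zero]
      induction k with
      | zero => simpa using hzI
      | succ j ih => rw [pow_succ]; exact hI_right _ ih z
  have h0 : cfc g (0 : A) = 0 := by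
    have hs : spectrum ℝ (0 : A) = {0} := spectrum.zero_eq
    calc cfc g (0 : A) = cfc (fun _ : ℝ => (0 : ℝ)) (0 : A) := by
          refine cfc_congr fun x hxs => ?_
          rw [hs] at hxs
          simp only [Set.mem_singleton_iff] at hxs
          rw [hxs, hg0]
      _ = algebraMap ℝ A 0 := cfc_const 0 (0 : A)
      _ = 0 := map_zero _
  have := cfc_diff_mem_aux I hI_closed hz (IsSelfAdjoint.zero A) hpow hg
  rwa [h0, sub_zero] at this

lemma star_mem_aux [Nontrivial A] (I : Submodule ℂ A) (hI_closed : IsClosed (I : Set A))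
    (hI_left : ∀ x ∈ I, ∀ y : A, y * x ∈ I) (hI_right : ∀ x ∈ I, ∀ y : A, x * y ∈ I)
    {x : A} (hx : x ∈ I) : star x ∈ I := by
  set z := x * star x with hzdef
  have hzI : z ∈ I := hI_right x hx (star x)
  have hzsa : IsSelfAdjoint z := IsSelfAdjoint.mul_star_self x
  have hzspec : ∀ t ∈ spectrum ℝ z, 0 ≤ t := by
    have h := spectrum_star_mul_self_nonneg (b := star x) (A := A)
    simpa [hzdef] using h
  have hcl : star x ∈ closure (I : Set A) := by
    rw [Metric.mem_closure_iff]
    intro ε hε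
    set δ : ℝ := min ε 1 with hδdef
    have hδ0 : 0 < δ := lt_min hε one_pos
    set r : ℝ := δ ^ 2 / 2 with hrdef
    have hr0 : 0 < r := by positivity
    set g : ℝ → ℝ := fun t => min 1 (t / r) with hgdef
    have hgcont : Continuous g := by
      apply Continuous.min continuous_const
      exact continuous_id.div_const r
    have hg0 : g 0 = 0 := by simp [hgdef]
    have hgI : cfc g z ∈ I := cfc_mem_aux I hI_closed hI_right hzsa hzI hgcont hg0
    refine ⟨star x * cfc g z, hI_left _ hgI (star x), ?_⟩
    rw [dist_eq_norm]
    set u1 : A := cfc (fun t : ℝ => 1 - g t) z with hu1def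
    have hu1 : star x - star x * cfc g z = star x * u1 := by
      rw [hu1def, cfc_sub (fun _ : ℝ => (1:ℝ)) g z continuous_const.continuousOn hgcont.continuousOn, cfc_const (1:ℝ) z, map_one, mul_sub, mul_one]
    have hu1sa : IsSelfAdjoint u1 := IsSelfAdjoint.cfc
    have hkey : ‖star x * u1‖ * ‖star x * u1‖ ≤ r := by
      have hstar : star (star x * u1) * (star x * u1) = u1 * (z * u1) := by
        rw [star_mul, star_star, hu1sa.star_eq]
        rw [hzdef]
        noncomm_ring
      have hfc : u1 * (z * u1) = cfc (fun t : ℝ => (1 - g t) * (t * (1 - g t))) z := by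
        have c1 : Continuous (fun t : ℝ => 1 - g t) := continuous_const.sub hgcont
        rw [cfc_mul (fun t : ℝ => 1 - g t) (fun t : ℝ => t * (1 - g t)) z c1.continuousOn
            ((continuous_id.mul c1).continuousOn),
          cfc_mul (fun t : ℝ => t) (fun t : ℝ => 1 - g t) z continuous_id.continuousOn
            c1.continuousOn, cfc_id' ℝ z]
      have hnorm : ‖cfc (fun t : ℝ => (1 - g t) * (t * (1 - g t))) z‖ ≤ r := by
        refine norm_cfc_le hr0.le fun t ht => ?_
        have ht0 : 0 ≤ t := hzspec t ht
        by_cases htr : t ≤ r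
        · have hg01 : 0 ≤ g t ∧ g t ≤ 1 := by
            constructor
            · exact le_min zero_le_one (div_nonneg ht0 hr0.le)
            · exact min_le_left _ _
          have h1 : 0 ≤ 1 - g t := by linarith [hg01.2]
          have h2 : 0 ≤ (1 - g t) * (t * (1 - g t)) := mul_nonneg h1 (mul_nonneg ht0 h1)
          rw [Real.norm_eq_abs, abs_of_nonneg h2]
          have h3 : (1 - g t) * (t * (1 - g t)) ≤ t := by
            nlinarith [mul_nonneg (mul_nonneg ht0 hg01.1)
              (by linarith [hg01.2] : (0:ℝ) ≤ 2 - g t)]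
          linarith
        · have : g t = 1 := by
            rw [hgdef]
            exact min_eq_left (by rw [le_div_iff₀ hr0]; nlinarith)
          rw [this]
          simpa using hr0.le
      calc ‖star x * u1‖ * ‖star x * u1‖ = ‖star (star x * u1) * (star x * u1)‖ :=
            (CStarRing.norm_star_mul_self).symm
        _ = ‖cfc (fun t : ℝ => (1 - g t) * (t * (1 - g t))) z‖ := by rw [hstar, hfc]
        _ ≤ r := hnorm
    rw [hu1]
    have hδε : δ ≤ ε := min_le_left _ _
    nlinarith [norm_nonneg (star x * u1)]
  rwa [hI_closed.closure_eq] at hcl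

end aux

set_option maxHeartbeats 1000000 in
/-- Let `I` be a closed two-sided ideal of a complex C*-algebra `A` and `a ≠ 0` with
`dist(a, I) < ‖a‖`.  If `ψ` is a norm-one bounded linear functional on `A` with
`ψ(a* a) = ‖a‖²`, then the restriction of `ψ` to `I` also has norm one. -/
theorem norm_restriction_to_ideal_eq_one
    {A : Type*} [NormedRing A] [StarRing A] [CStarRing A]
    [NormedAlgebra ℂ A] [StarModule ℂ A] [CompleteSpace A]
    (I : Submodule ℂ A) (hI_closed : IsClosed (I : Set A))
    (hI_left : ∀ x ∈ I, ∀ y : A, y * x ∈ I)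
    (hI_right : ∀ x ∈ I, ∀ y : A, x * y ∈ I)
    (a : A) (ha : a ≠ 0) (hdist : Metric.infDist a (I : Set A) < ‖a‖)
    (ψ : A →L[ℂ] ℂ) (hψ : ‖ψ‖ = 1)
    (hψa : ψ (star a * a) = ((‖a‖ ^ 2 : ℝ) : ℂ)) :
    ‖ψ.comp I.subtypeL‖ = 1 := by
  letI : CStarAlgebra A := {}
  haveI : Nontrivial A := ⟨a, 0, ha⟩
  have hanorm : 0 < ‖a‖ := norm_pos_iff.mpr ha
  set H : ℝ := ‖a‖ ^ 2 with hHdef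
  have hH0 : 0 < H := by positivity
  set h : A := star a * a with hhdef
  have hhsa : IsSelfAdjoint h := IsSelfAdjoint.star_mul_self a
  have hhnorm : ‖h‖ = H := by rw [hhdef, CStarRing.norm_star_mul_self, hHdef, sq]
  have hhspec : ∀ t ∈ spectrum ℝ h, 0 ≤ t ∧ t ≤ H := by
    intro t ht
    constructor
    · exact spectrum_star_mul_self_nonneg (b := a) t (hhdef ▸ ht)
    · have h1 := spectrum.norm_le_norm_of_mem ht
      rw [hhnorm] at h1
      exact le_of_abs_le (by rwa [Real.norm_eq_abs] at h1)
  set d : ℝ := Metric.infDist a (I : Set A) with hddef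
  have hd0 : 0 ≤ d := Metric.infDist_nonneg
  have hdH : d ^ 2 < H := by rw [hHdef]; nlinarith
  set m : ℝ := (d ^ 2 + H) / 2 with hmdef
  set m' : ℝ := (d ^ 2 + m) / 2 with hm'def
  set s : ℝ := H - m with hsdef
  have hd2 : 0 ≤ d ^ 2 := sq_nonneg d
  have hdm : d ^ 2 < m := by rw [hmdef]; linarith
  have hm'd : d ^ 2 < m' := by rw [hm'def]; linarith
  have hm'm : m' < m := by rw [hm'def]; linarith
  have hmH : m < H := by rw [hmdef]; linarith
  have hm'0 : 0 < m' := lt_of_le_of_lt hd2 hm'd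
  have hs0 : 0 < s := by rw [hsdef]; linarith
  have hsm : s ≤ m := by rw [hsdef, hmdef]; linarith
  have hmm' : 0 < m - m' := by linarith
  -- choose b ∈ I close to a
  have hdlt : Metric.infDist a (I : Set A) < Real.sqrt m' := by
    rw [← hddef]
    exact (Real.lt_sqrt hd0).mpr hm'd
  obtain ⟨b, hbI, hab⟩ := (Metric.infDist_lt_iff ⟨0, I.zero_mem⟩).mp hdlt
  have hab' : ‖a - b‖ < Real.sqrt m' := by rwa [dist_eq_norm] at hab
  set h' : A := star (a - b) * (a - b) with hh'def
  have hh'sa : IsSelfAdjoint h' := IsSelfAdjoint.star_mul_self _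
  have hh'norm : ‖h'‖ < m' := by
    rw [hh'def, CStarRing.norm_star_mul_self]
    calc ‖a - b‖ * ‖a - b‖ < Real.sqrt m' * Real.sqrt m' :=
          mul_self_lt_mul_self (norm_nonneg _) hab'
      _ = m' := Real.mul_self_sqrt hm'0.le
  -- h - h' ∈ I
  have hstarb : star b ∈ I := star_mem_aux I hI_closed hI_left hI_right hbI
  have hdiffI : h - h' ∈ I := by
    have e : h - h' = star b * a + star a * b - star b * b := by
      rw [hhdef, hh'def, star_sub]; noncomm_ring
    rw [e]
    exact I.sub_mem (I.add_mem (hI_right _ hstarb a) (hI_left b hbI (star a)))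
      (hI_left b hbI (star b))
  have hpows : ∀ n : ℕ, h ^ n - h' ^ n ∈ I := by
    intro n
    induction n with
    | zero => simpa using I.zero_mem
    | succ k ih =>
      have e : h ^ (k + 1) - h' ^ (k + 1) = h ^ k * (h - h') + (h ^ k - h' ^ k) * h' := by
        noncomm_ring
      rw [e]
      exact I.add_mem (hI_left _ hdiffI (h ^ k)) (hI_right _ ih h')
  -- the cutoff function
  set f : ℝ → ℝ := fun t => min 1 (max 0 ((t - m') / (m - m'))) with hfdef
  have hfcont : Continuous f := by
    apply Continuous.min continuous_const
    exact Continuous.max continuous_const ((continuous_id.sub continuous_const).div_const _)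
  have hf01 : ∀ t, 0 ≤ f t ∧ f t ≤ 1 := fun t =>
    ⟨le_min zero_le_one (le_max_left _ _), min_le_left _ _⟩
  have hf0 : ∀ t, t ≤ m' → f t = 0 := by
    intro t htm
    have hu : (t - m') / (m - m') ≤ 0 := (div_le_iff₀ hmm').mpr (by linarith)
    rw [hfdef]
    simp only
    rw [max_eq_left hu, min_eq_right zero_le_one]
  have hf1 : ∀ t, m ≤ t → f t = 1 := by
    intro t htm
    have hu : 1 ≤ (t - m') / (m - m') := (le_div_iff₀ hmm').mpr (by linarith)
    rw [hfdef]
    simp only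
    rw [min_eq_left (le_trans hu (le_max_right _ _))]
  set c : A := cfc f h with hcdef
  have hcnorm : ‖c‖ ≤ 1 := by
    rw [hcdef]
    refine norm_cfc_le zero_le_one fun t ht => ?_
    rw [Real.norm_eq_abs, abs_of_nonneg (hf01 t).1]
    exact (hf01 t).2
  -- c ∈ I
  have hfh' : cfc f h' = 0 := by
    have e : cfc f h' = cfc (fun _ : ℝ => (0 : ℝ)) h' := by
      refine cfc_congr fun t ht => ?_
      have h1 := spectrum.norm_le_norm_of_mem ht
      rw [Real.norm_eq_abs] at h1
      exact hf0 t (le_of_abs_le (le_of_lt (lt_of_le_of_lt h1 hh'norm)))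
    rw [e, cfc_const 0 h', map_zero]
  have hcI : c ∈ I := by
    have hmem := cfc_diff_mem_aux I hI_closed hhsa hh'sa hpows hfcont
    rwa [hfh', sub_zero, ← hcdef] at hmem
  -- norm bound
  have hkey : h - s • c = cfc (fun t : ℝ => t - s * f t) h := by
    rw [cfc_sub (fun t : ℝ => t) (fun t : ℝ => s * f t) h continuous_id.continuousOn
      ((continuous_const.mul hfcont).continuousOn), cfc_id' ℝ h,
      cfc_const_mul s f h hfcont.continuousOn, hcdef]
  have hnb : ‖h - s • c‖ ≤ m := by
    rw [hkey]
    refine norm_cfc_le (by linarith) fun t ht => ?_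
    obtain ⟨ht0, htH⟩ := hhspec t ht
    rw [Real.norm_eq_abs, abs_le]
    by_cases htm : m ≤ t
    · rw [hf1 t htm]
      constructor <;> [linarith; linarith]
    · push_neg at htm
      obtain ⟨hft0, hft1⟩ := hf01 t
      constructor
      · nlinarith
      · nlinarith
  -- ψ estimates
  have hψc1 : (1 : ℝ) ≤ ‖ψ c‖ := by
    have happ : ψ (h - s • c) = (H : ℂ) - (s : ℂ) * ψ c := by
      rw [map_sub, hψa]
      congr 1
      have e : s • c = (s : ℂ) • c := by
        rw [← smul_one_smul ℂ s c]
        congr 1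
        simp
      rw [e, map_smul, smul_eq_mul]
    have hb2 : ‖ψ (h - s • c)‖ ≤ m := by
      calc ‖ψ (h - s • c)‖ ≤ ‖ψ‖ * ‖h - s • c‖ := ψ.le_opNorm _
        _ ≤ 1 * m := by rw [hψ]; simpa using hnb
        _ = m := one_mul m
    rw [happ] at hb2
    have hre : H - s * (ψ c).re ≤ m := by
      have h1 := Complex.re_le_norm ((H : ℂ) - (s : ℂ) * ψ c)
      have h2 : ((H : ℂ) - (s : ℂ) * ψ c).re = H - s * (ψ c).re := by
        simp [Complex.sub_re, Complex.mul_re]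
      rw [h2] at h1
      linarith
    have hrege : 1 ≤ (ψ c).re := by
      have : s * 1 ≤ s * (ψ c).re := by rw [hsdef] at *; linarith
      exact le_of_mul_le_mul_left this hs0
    calc (1 : ℝ) ≤ (ψ c).re := hrege
      _ ≤ ‖ψ c‖ := Complex.re_le_norm _
  -- conclusion
  refine le_antisymm ?_ ?_
  · refine ContinuousLinearMap.opNorm_le_bound _ zero_le_one fun x => ?_
    calc ‖(ψ.comp I.subtypeL) x‖ = ‖ψ (x : A)‖ := rfl
      _ ≤ ‖ψ‖ * ‖(x : A)‖ := ψ.le_opNorm _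
      _ = 1 * ‖x‖ := by rw [hψ]; rfl
  · have happ : (ψ.comp I.subtypeL) ⟨c, hcI⟩ = ψ c := rfl
    have h1 : ‖ψ c‖ ≤ ‖ψ.comp I.subtypeL‖ * ‖(⟨c, hcI⟩ : I)‖ := by
      rw [← happ]
      exact (ψ.comp I.subtypeL).le_opNorm _
    have h2 : ‖(⟨c, hcI⟩ : I)‖ = ‖c‖ := rfl
    rw [h2] at h1
    have h3 : ‖ψ.comp I.subtypeL‖ * ‖c‖ ≤ ‖ψ.comp I.subtypeL‖ * 1 :=
      mul_le_mul_of_nonneg_left hcnorm (ContinuousLinearMap.opNorm_nonneg _)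
    rw [mul_one] at h3
    linarith
end

section
/- Let H be a complex Hilbert space and let A ∈ B(H) be nonzero. Let H₀ = { u ∈ H : ‖A u‖ = ‖A‖·‖u‖ } (which equals the eigenspace ker(A* A − ‖A‖² I) and is hence a closed subspace). If H₀ is finite dimensional and nonzero, and sup{ ‖A x‖ : x ∈ H, ‖x‖ = 1, x ⊥ H₀ } < ‖A‖, then dist(A, K(H)) < ‖A‖, where K(H) denotes the compact operators on H. -/
/-- Any continuous linear map into a finite-dimensional space is a compact operator. -/
lemma isCompactOperator_of_finiteDimensional_target
    {E F : Type*} [NormedAddCommGroup E] [NormedSpace ℂ E]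
    [NormedAddCommGroup F] [NormedSpace ℂ F] [FiniteDimensional ℂ F]
    (f : E →L[ℂ] F) : IsCompactOperator f := by
  refine ⟨Metric.closedBall 0 ‖f‖, ProperSpace.isCompact_closedBall 0 ‖f‖, ?_⟩
  refine Filter.mem_of_superset (Metric.closedBall_mem_nhds 0 one_pos) ?_
  intro x hx
  simp only [Set.mem_preimage, Metric.mem_closedBall, dist_zero_right] at hx ⊢
  calc ‖f x‖ ≤ ‖f‖ * ‖x‖ := f.le_opNorm x
    _ ≤ ‖f‖ * 1 := by
        exact mul_le_mul_of_nonneg_left hx (norm_nonneg f)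
    _ = ‖f‖ := mul_one _

/-- Let `0 ≠ A ∈ B(H)` and let `H₀` be the subspace `{u : ‖A u‖ = ‖A‖ ‖u‖}`
(the eigenspace `ker(A* A - ‖A‖² I)`).  If `H₀` is finite dimensional and nonzero,
and `sup {‖A x‖ : ‖x‖ = 1, x ⊥ H₀} < ‖A‖`, then `dist(A, K(H)) < ‖A‖`. -/
theorem infDist_compact_lt_of_finiteDimensional_norming_space
    {H : Type*} [NormedAddCommGroup H] [InnerProductSpace ℂ H] [CompleteSpace H]
    (A : H →L[ℂ] H) (hA : A ≠ 0)
    (H₀ : Submodule ℂ H)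
    (hH₀ : (H₀ : Set H) = {u : H | ‖A u‖ = ‖A‖ * ‖u‖})
    (hfin : FiniteDimensional ℂ H₀) (hne : H₀ ≠ ⊥)
    (hsup : sSup {r : ℝ | ∃ x : H, ‖x‖ = 1 ∧ (∀ u ∈ H₀, (inner ℂ x u : ℂ) = 0) ∧
      r = ‖A x‖} < ‖A‖) :
    Metric.infDist A {T : H →L[ℂ] H | IsCompactOperator T} < ‖A‖ := by
  classical
  set S : Set ℝ := {r : ℝ | ∃ x : H, ‖x‖ = 1 ∧ (∀ u ∈ H₀, (inner ℂ x u : ℂ) = 0) ∧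
      r = ‖A x‖} with hS
  have hbdd : BddAbove S := by
    refine ⟨‖A‖, ?_⟩
    rintro r ⟨x, hx1, -, rfl⟩
    calc ‖A x‖ ≤ ‖A‖ * ‖x‖ := A.le_opNorm x
      _ = ‖A‖ := by rw [hx1, mul_one]
  have hS0 : 0 ≤ sSup S := by
    apply Real.sSup_nonneg
    rintro r ⟨x, -, -, rfl⟩
    exact norm_nonneg _
  have : CompleteSpace H₀ := FiniteDimensional.complete ℂ H₀
  set K : H →L[ℂ] H := (A.comp H₀.subtypeL).comp (H₀.orthogonalProjection) with hKdef
  have hKcompact : IsCompactOperator K :=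
    (isCompactOperator_of_finiteDimensional_target (H₀.orthogonalProjection)).clm_comp
      (A.comp H₀.subtypeL)
  have hbound : ‖A - K‖ ≤ sSup S := by
    refine ContinuousLinearMap.opNorm_le_bound _ hS0 ?_
    intro x
    set y : H := x - (H₀.orthogonalProjection x : H) with hy
    have hyortho : y ∈ H₀ᗮ := Submodule.sub_starProjection_mem_orthogonal x
    have hApply : (A - K) x = A y := by
      simp [hKdef, hy, map_sub]
    have hylex : ‖y‖ ≤ ‖x‖ := by
      have h := H₀.orthogonalProjectionFn_norm_sq x
      rw [Submodule.orthogonalProjectionFn_eq] at h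
      nlinarith [norm_nonneg y, norm_nonneg x,
        norm_nonneg ((H₀.orthogonalProjection x : H))]
    have hAy : ‖A y‖ ≤ sSup S * ‖y‖ := by
      rcases eq_or_ne y 0 with h0 | h0
      · simp [h0]
      · set u : H := ((‖y‖ : ℂ))⁻¹ • y with hu
        have hyne : (‖y‖ : ℂ) ≠ 0 := by
          exact_mod_cast norm_ne_zero_iff.mpr h0
        have hcn : ‖((‖y‖ : ℂ))‖ = ‖y‖ := by simp
        have hnu : ‖u‖ = 1 := by
          rw [hu, norm_smul, norm_inv, hcn,
            inv_mul_cancel₀ (norm_ne_zero_iff.mpr h0)]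
        have huortho : u ∈ H₀ᗮ := H₀ᗮ.smul_mem ((‖y‖ : ℂ))⁻¹ hyortho
        have hmem : ‖A u‖ ∈ S := by
          refine ⟨u, hnu, ?_, rfl⟩
          intro w hw
          rw [← inner_conj_symm]
          rw [Submodule.mem_orthogonal] at huortho
          rw [huortho w hw, map_zero]
        have hle : ‖A u‖ ≤ sSup S := le_csSup hbdd hmem
        have hyu : y = (‖y‖ : ℂ) • u := by
          rw [hu, smul_smul, mul_inv_cancel₀ hyne, one_smul]
        have hAyu : A y = (‖y‖ : ℂ) • A u := by
          rw [← map_smul]; exact congrArg A hyu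
        calc ‖A y‖ = ‖y‖ * ‖A u‖ := by
              rw [hAyu, norm_smul, hcn]
          _ ≤ ‖y‖ * sSup S := mul_le_mul_of_nonneg_left hle (norm_nonneg y)
          _ = sSup S * ‖y‖ := mul_comm _ _
    calc ‖(A - K) x‖ = ‖A y‖ := by rw [hApply]
      _ ≤ sSup S * ‖y‖ := hAy
      _ ≤ sSup S * ‖x‖ := mul_le_mul_of_nonneg_left hylex hS0
  calc Metric.infDist A {T : H →L[ℂ] H | IsCompactOperator T}
      ≤ dist A K := Metric.infDist_le_dist_of_mem hKcompact
    _ = ‖A - K‖ := dist_eq_norm A K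
    _ ≤ sSup S := hbound
    _ < ‖A‖ := hsup
end

section
/- Let H be a complex Hilbert space and let C₁(H) be the space of trace-class operators on H with the trace norm ‖·‖₁. For any unit vectors u, v ∈ H, the rank-one operator u ⊗ v̄ (defined by w ↦ ⟨v, w⟩ u) is an extreme point of the closed unit ball of C₁(H). -/
open scoped ComplexConjugate

local notation "⟪" x ", " y "⟫" => @inner ℂ _ _ x y

def traceClassUnitBall (H : Type*) [NormedAddCommGroup H] [InnerProductSpace ℂ H] :
    Set (H →L[ℂ] H) :=
  {T : H →L[ℂ] H | ∀ (n : ℕ) (e f : Fin n → H), Orthonormal ℂ e → Orthonormal ℂ f →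
    ∑ i, ‖(inner ℂ (e i) (T (f i)) : ℂ)‖ ≤ 1}

section Aux
variable {H : Type*} [NormedAddCommGroup H] [InnerProductSpace ℂ H]

lemma on_single {a : H} (ha : ‖a‖ = 1) : Orthonormal ℂ (fun _ : Fin 1 => a) := by
  rw [orthonormal_iff_ite]
  intro i j
  simp [Subsingleton.elim i j, inner_self_eq_norm_sq_to_K, ha]

lemma on_pair {a b : H} (ha : ‖a‖ = 1) (hb : ‖b‖ = 1) (hab : ⟪a, b⟫ = 0) :
    Orthonormal ℂ ![a, b] := by
  have hba : ⟪b, a⟫ = 0 := by rw [← inner_conj_symm, hab, map_zero]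
  rw [orthonormal_iff_ite]
  intro i j
  fin_cases i <;> fin_cases j <;>
    simp [inner_self_eq_norm_sq_to_K, ha, hb, hab, hba]

lemma defect {d : ℂ} (h : (1 + ‖d‖ ^ 2 : ℝ) ≤ Real.sqrt (1 + ‖d‖ ^ 2)) : d = 0 := by
  have h0 : (0:ℝ) ≤ 1 + ‖d‖ ^ 2 := by positivity
  have h1 := Real.sq_sqrt h0
  have hd : ‖d‖ ^ 2 ≤ 0 := by
    nlinarith [Real.sqrt_nonneg (1 + ‖d‖ ^ 2), sq_nonneg (Real.sqrt (1 + ‖d‖ ^ 2) - 1),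
      norm_nonneg d]
  have : ‖d‖ = 0 := by nlinarith [norm_nonneg d]
  simpa using this

lemma disc_extreme {a b : ℂ} {s t : ℝ} (ha : ‖a‖ ≤ 1) (hb : ‖b‖ ≤ 1)
    (hs : 0 < s) (ht : 0 < t) (hst : s + t = 1) (h : (s:ℂ) * a + (t:ℂ) * b = 1) :
    a = 1 ∧ b = 1 := by
  have hre : s * a.re + t * b.re = 1 := by
    have := congrArg Complex.re h
    simpa using this
  have hare : a.re ≤ ‖a‖ := Complex.re_le_norm a
  have hbre : b.re ≤ ‖b‖ := Complex.re_le_norm b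
  have ha1 : a.re = 1 := by nlinarith
  have hb1 : b.re = 1 := by nlinarith
  have hna : a.re * a.re + a.im * a.im ≤ 1 := by
    have h2 : Complex.normSq a ≤ 1 := by
      rw [← Complex.sq_norm]; nlinarith [norm_nonneg a]
    simpa [Complex.normSq_apply] using h2
  have hnb : b.re * b.re + b.im * b.im ≤ 1 := by
    have h2 : Complex.normSq b ≤ 1 := by
      rw [← Complex.sq_norm]; nlinarith [norm_nonneg b]
    simpa [Complex.normSq_apply] using h2
  constructor
  · apply Complex.ext <;> simp [ha1] <;> nlinarith [sq_nonneg a.im]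
  · apply Complex.ext <;> simp [hb1] <;> nlinarith [sq_nonneg b.im]

end Aux

section Key
variable {H : Type*} [NormedAddCommGroup H] [InnerProductSpace ℂ H] [CompleteSpace H]

omit [CompleteSpace H] in
lemma mem_ball (u v : H) (hu : ‖u‖ = 1) (hv : ‖v‖ = 1) :
    ((innerSL ℂ v).smulRight u : H →L[ℂ] H) ∈ traceClassUnitBall H := by
  intro n e f he hf
  have hterm : ∀ i, ‖(⟪e i, ((innerSL ℂ v).smulRight u) (f i)⟫ : ℂ)‖
      = ‖(⟪f i, v⟫ : ℂ)‖ * ‖(⟪e i, u⟫ : ℂ)‖ := by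
    intro i
    rw [ContinuousLinearMap.smulRight_apply, innerSL_apply_apply, inner_smul_right, norm_mul,
      norm_inner_symm]
  calc ∑ i, ‖(⟪e i, ((innerSL ℂ v).smulRight u) (f i)⟫ : ℂ)‖
      = ∑ i, ‖(⟪f i, v⟫ : ℂ)‖ * ‖(⟪e i, u⟫ : ℂ)‖ := by simp_rw [hterm]
    _ ≤ 1 := by
        have hcs := Finset.sum_mul_sq_le_sq_mul_sq Finset.univ
          (fun i => ‖(⟪f i, v⟫ : ℂ)‖) (fun i => ‖(⟪e i, u⟫ : ℂ)‖)
        have hbf : ∑ i, ‖(⟪f i, v⟫ : ℂ)‖ ^ 2 ≤ 1 := by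
          simpa [hv] using hf.sum_inner_products_le v (s := Finset.univ)
        have hbe : ∑ i, ‖(⟪e i, u⟫ : ℂ)‖ ^ 2 ≤ 1 := by
          simpa [hu] using he.sum_inner_products_le u (s := Finset.univ)
        have hnn : (0:ℝ) ≤ ∑ i, ‖(⟪f i, v⟫ : ℂ)‖ * ‖(⟪e i, u⟫ : ℂ)‖ :=
          Finset.sum_nonneg fun i _ => by positivity
        have h1 : (0:ℝ) ≤ ∑ i, ‖(⟪f i, v⟫ : ℂ)‖ ^ 2 :=
          Finset.sum_nonneg fun i _ => sq_nonneg _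
        nlinarith

lemma key (u v : H) (hu : ‖u‖ = 1) (hv : ‖v‖ = 1) (S : H →L[ℂ] H)
    (hS : S ∈ traceClassUnitBall H) (h1 : (⟪u, S v⟫ : ℂ) = 1) :
    S = ((innerSL ℂ v).smulRight u : H →L[ℂ] H) := by
  have huu : (⟪u, u⟫ : ℂ) = 1 := by
    rw [inner_self_eq_norm_sq_to_K, hu]; norm_num
  have hvv : (⟪v, v⟫ : ℂ) = 1 := by
    rw [inner_self_eq_norm_sq_to_K, hv]; norm_num
  -- Step A : y ⊥ u (unit) implies ⟪y, S v⟫ = 0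
  have stepA : ∀ y : H, ‖y‖ = 1 → (⟪u, y⟫ : ℂ) = 0 → (⟪y, S v⟫ : ℂ) = 0 := by
    intro y hy huy
    set d : ℂ := ⟪y, S v⟫ with hd
    set s : ℝ := 1 + ‖d‖ ^ 2 with hs
    have hs1 : (1:ℝ) ≤ s := by rw [hs]; nlinarith [sq_nonneg ‖d‖]
    have hsqrt_pos : 0 < Real.sqrt s := Real.sqrt_pos.2 (by linarith)
    set e : H := ((Real.sqrt s : ℂ))⁻¹ • (u + d • y) with he
    have hnorm2 : ‖u + d • y‖ ^ 2 = s := by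
      rw [@norm_add_sq ℂ]
      simp [inner_smul_right, huy, norm_smul, hu, hy, hs]
    have hne : ‖u + d • y‖ = Real.sqrt s := by
      rw [← Real.sqrt_sq (norm_nonneg (u + d • y)), hnorm2]
    have hnorme : ‖e‖ = 1 := by
      rw [he, norm_smul, hne]
      simp [abs_of_nonneg hsqrt_pos.le]
      rw [inv_mul_cancel₀ hsqrt_pos.ne']
    have hball := hS 1 (fun _ => e) (fun _ => v) (on_single hnorme) (on_single hv)
    have hinner : (⟪e, S v⟫ : ℂ) = ((Real.sqrt s : ℂ))⁻¹ * (s : ℂ) := by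
      rw [he, inner_smul_left, inner_add_left, inner_smul_left, h1, ← hd,
        RCLike.conj_mul]
      simp [hs]
    have hnormval : ‖(⟪e, S v⟫ : ℂ)‖ = (Real.sqrt s)⁻¹ * s := by
      rw [hinner, norm_mul]
      simp [abs_of_nonneg hsqrt_pos.le, abs_of_nonneg (by linarith : (0:ℝ) ≤ s)]
    have hle : (Real.sqrt s)⁻¹ * s ≤ 1 := by
      have : ∑ _i : Fin 1, ‖(⟪e, S v⟫ : ℂ)‖ ≤ 1 := hball
      simpa [hnormval] using this
    have hsle : s ≤ Real.sqrt s := by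
      have := mul_le_mul_of_nonneg_right hle hsqrt_pos.le
      rw [one_mul, mul_comm (Real.sqrt s)⁻¹ s, mul_assoc,
        inv_mul_cancel₀ hsqrt_pos.ne', mul_one] at this
      exact this
    exact defect (by rw [← hs]; exact hsle)
  -- general version of step A
  have stepA' : ∀ y : H, (⟪u, y⟫ : ℂ) = 0 → (⟪y, S v⟫ : ℂ) = 0 := by
    intro y huy
    rcases eq_or_ne y 0 with rfl | hy0
    · simp
    · have hn : ‖y‖ ≠ 0 := norm_ne_zero_iff.2 hy0
      have := stepA (((‖y‖ : ℝ) : ℂ)⁻¹ • y) (by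
          rw [norm_smul]; simp [abs_of_nonneg (norm_nonneg y)]
          rw [inv_mul_cancel₀ hn]) (by
          rw [inner_smul_right, huy, mul_zero])
      rw [inner_smul_left] at this
      have h2 : (((‖y‖ : ℝ) : ℂ))⁻¹ ≠ 0 := by
        simp [hn]
      rw [map_inv₀, Complex.conj_ofReal] at this
      exact (mul_eq_zero.1 this).resolve_left (by simpa using hn)
  -- Step B2 : x ⊥ v (unit) implies ⟪u, S x⟫ = 0
  have stepB2 : ∀ x : H, ‖x‖ = 1 → (⟪v, x⟫ : ℂ) = 0 → (⟪u, S x⟫ : ℂ) = 0 := by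
    intro x hx hvx
    set c : ℂ := ⟪u, S x⟫ with hc
    set s : ℝ := 1 + ‖c‖ ^ 2 with hs
    have hs1 : (1:ℝ) ≤ s := by rw [hs]; nlinarith [sq_nonneg ‖c‖]
    have hsqrt_pos : 0 < Real.sqrt s := Real.sqrt_pos.2 (by linarith)
    set f : H := ((Real.sqrt s : ℂ))⁻¹ • (v + (conj c) • x) with hf
    have hnorm2 : ‖v + (conj c) • x‖ ^ 2 = s := by
      rw [@norm_add_sq ℂ]
      simp [inner_smul_right, hvx, norm_smul, hv, hx, hs]
    have hne : ‖v + (conj c) • x‖ = Real.sqrt s := by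
      rw [← Real.sqrt_sq (norm_nonneg _), hnorm2]
    have hnormf : ‖f‖ = 1 := by
      rw [hf, norm_smul, hne]
      simp [abs_of_nonneg hsqrt_pos.le]
      rw [inv_mul_cancel₀ hsqrt_pos.ne']
    have hball := hS 1 (fun _ => u) (fun _ => f) (on_single hu) (on_single hnormf)
    have hinner : (⟪u, S f⟫ : ℂ) = ((Real.sqrt s : ℂ))⁻¹ * (s : ℂ) := by
      rw [hf, map_smul, inner_smul_right, map_add, inner_add_right, h1, map_smul,
        inner_smul_right, ← hc]
      have : (conj c) * c = ((‖c‖ : ℝ) : ℂ) ^ 2 := RCLike.conj_mul c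
      rw [this]
      simp [hs]
    have hnormval : ‖(⟪u, S f⟫ : ℂ)‖ = (Real.sqrt s)⁻¹ * s := by
      rw [hinner, norm_mul]
      simp [abs_of_nonneg hsqrt_pos.le, abs_of_nonneg (by linarith : (0:ℝ) ≤ s)]
    have hle : (Real.sqrt s)⁻¹ * s ≤ 1 := by
      have : ∑ _i : Fin 1, ‖(⟪u, S f⟫ : ℂ)‖ ≤ 1 := hball
      simpa [hnormval] using this
    have hsle : s ≤ Real.sqrt s := by
      have := mul_le_mul_of_nonneg_right hle hsqrt_pos.le
      rw [one_mul, mul_comm (Real.sqrt s)⁻¹ s, mul_assoc,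
        inv_mul_cancel₀ hsqrt_pos.ne', mul_one] at this
      exact this
    exact defect (by rw [← hs]; exact hsle)
  -- Step B1 : x ⊥ v, y ⊥ u (units) implies ⟪y, S x⟫ = 0
  have stepB1 : ∀ x y : H, ‖x‖ = 1 → ‖y‖ = 1 → (⟪v, x⟫ : ℂ) = 0 → (⟪u, y⟫ : ℂ) = 0 →
      (⟪y, S x⟫ : ℂ) = 0 := by
    intro x y hx hy hvx huy
    have hball := hS 2 ![u, y] ![v, x] (on_pair hu hy huy) (on_pair hv hx hvx)
    rw [Fin.sum_univ_two] at hball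
    simp only [Matrix.cons_val_zero, Matrix.cons_val_one, Matrix.head_cons] at hball
    rw [h1] at hball
    simp at hball
    exact hball
  -- general version of step B1
  have stepB1' : ∀ x y : H, ‖x‖ = 1 → (⟪v, x⟫ : ℂ) = 0 → (⟪u, y⟫ : ℂ) = 0 →
      (⟪y, S x⟫ : ℂ) = 0 := by
    intro x y hx hvx huy
    rcases eq_or_ne y 0 with rfl | hy0
    · simp
    · have hn : ‖y‖ ≠ 0 := norm_ne_zero_iff.2 hy0
      have := stepB1 x (((‖y‖ : ℝ) : ℂ)⁻¹ • y) hx (by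
          rw [norm_smul]; simp [abs_of_nonneg (norm_nonneg y)]
          rw [inv_mul_cancel₀ hn]) hvx (by
          rw [inner_smul_right, huy, mul_zero])
      rw [inner_smul_left, map_inv₀, Complex.conj_ofReal] at this
      exact (mul_eq_zero.1 this).resolve_left (by simpa using hn)
  -- S x = 0 for unit x ⊥ v
  have hSx : ∀ x : H, ‖x‖ = 1 → (⟪v, x⟫ : ℂ) = 0 → S x = 0 := by
    intro x hx hvx
    apply ext_inner_left ℂ
    intro z
    have hzd : (⟪u, z - (⟪u, z⟫ : ℂ) • u⟫ : ℂ) = 0 := by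
      rw [inner_sub_right, inner_smul_right, huu, mul_one, sub_self]
    have h2 := stepB1' x (z - (⟪u, z⟫ : ℂ) • u) hx hvx hzd
    have h3 := stepB2 x hx hvx
    have hz : z = (z - (⟪u, z⟫ : ℂ) • u) + (⟪u, z⟫ : ℂ) • u := by abel
    rw [hz, inner_add_left, h2, inner_smul_left, h3, mul_zero, add_zero, inner_zero_right]
  -- S x = 0 for all x ⊥ v
  have hSx' : ∀ x : H, (⟪v, x⟫ : ℂ) = 0 → S x = 0 := by
    intro x hvx
    rcases eq_or_ne x 0 with rfl | hx0
    · simp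
    · have hn : ‖x‖ ≠ 0 := norm_ne_zero_iff.2 hx0
      have := hSx (((‖x‖ : ℝ) : ℂ)⁻¹ • x) (by
          rw [norm_smul]; simp [abs_of_nonneg (norm_nonneg x)]
          rw [inv_mul_cancel₀ hn]) (by rw [inner_smul_right, hvx, mul_zero])
      rw [map_smul, smul_eq_zero] at this
      exact this.resolve_left (by simp [hn])
  -- S v = u
  have hSv : S v = u := by
    apply ext_inner_left ℂ
    intro z
    have hzd : (⟪u, z - (⟪u, z⟫ : ℂ) • u⟫ : ℂ) = 0 := by
      rw [inner_sub_right, inner_smul_right, huu, mul_one, sub_self]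
    have h2 := stepA' (z - (⟪u, z⟫ : ℂ) • u) hzd
    have hz : z = (z - (⟪u, z⟫ : ℂ) • u) + (⟪u, z⟫ : ℂ) • u := by abel
    have hyu : (⟪z - (⟪u, z⟫ : ℂ) • u, u⟫ : ℂ) = 0 := by
      rw [← inner_conj_symm, hzd, map_zero]
    conv_lhs => rw [hz]
    conv_rhs => rw [hz]
    rw [inner_add_left, inner_add_left, h2, hyu, inner_smul_left, inner_smul_left,
      h1, huu]
  -- conclude
  ext w
  have hdx : (⟪v, w - (⟪v, w⟫ : ℂ) • v⟫ : ℂ) = 0 := by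
    rw [inner_sub_right, inner_smul_right, hvv, mul_one, sub_self]
  have h0 := hSx' (w - (⟪v, w⟫ : ℂ) • v) hdx
  have hw : w = (w - (⟪v, w⟫ : ℂ) • v) + (⟪v, w⟫ : ℂ) • v := by abel
  rw [ContinuousLinearMap.smulRight_apply, innerSL_apply_apply]
  conv_lhs => rw [hw]
  rw [map_add, h0, zero_add, map_smul, hSv]

end Key

/-- For unit vectors `u, v ∈ H`, the rank-one operator `u ⊗ v̄ : w ↦ ⟨v, w⟩ u` is an
extreme point of the closed unit ball of the trace class `C₁(H)` (with the trace
norm). -/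
theorem rankOne_extremePoint_traceClass
    {H : Type*} [NormedAddCommGroup H] [InnerProductSpace ℂ H] [CompleteSpace H]
    (u v : H) (hu : ‖u‖ = 1) (hv : ‖v‖ = 1) :
    ((innerSL ℂ v).smulRight u : H →L[ℂ] H) ∈
      Set.extremePoints ℝ (traceClassUnitBall H) := by
  rw [mem_extremePoints]
  refine ⟨mem_ball u v hu hv, ?_⟩
  intro A hA B hB hseg
  obtain ⟨s, t, hs, ht, hst, heq⟩ := hseg
  have huu : (⟪u, u⟫ : ℂ) = 1 := by
    rw [inner_self_eq_norm_sq_to_K, hu]; norm_num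
  have hvv : (⟪v, v⟫ : ℂ) = 1 := by
    rw [inner_self_eq_norm_sq_to_K, hv]; norm_num
  have hTv : (⟪u, ((innerSL ℂ v).smulRight u) v⟫ : ℂ) = 1 := by
    rw [ContinuousLinearMap.smulRight_apply, innerSL_apply_apply, inner_smul_right, hvv, huu,
      mul_one]
  have hcomb : (s : ℂ) * (⟪u, A v⟫ : ℂ) + (t : ℂ) * (⟪u, B v⟫ : ℂ) = 1 := by
    have happ : (s • A + t • B) v = (s : ℂ) • A v + (t : ℂ) • B v := by
      rw [ContinuousLinearMap.add_apply, ContinuousLinearMap.smul_apply,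
        ContinuousLinearMap.smul_apply, RCLike.real_smul_eq_coe_smul (K := ℂ),
        RCLike.real_smul_eq_coe_smul (K := ℂ)]
      rfl
    rw [← hTv, ← heq, happ, inner_add_right, inner_smul_right, inner_smul_right]
  have hnA : ‖(⟪u, A v⟫ : ℂ)‖ ≤ 1 := by
    have := hA 1 (fun _ => u) (fun _ => v) (on_single hu) (on_single hv)
    simpa using this
  have hnB : ‖(⟪u, B v⟫ : ℂ)‖ ≤ 1 := by
    have := hB 1 (fun _ => u) (fun _ => v) (on_single hu) (on_single hv)
    simpa using this
  obtain ⟨ha1, hb1⟩ := disc_extreme hnA hnB hs ht hst hcomb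
  exact ⟨key u v hu hv A hA ha1, key u v hu hv B hB hb1⟩
end
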